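/- arXiv:2205.04984 — 2 statements merged into one kernel-verified Lean document; each statement's English description precedes it below -/
import Mathlib

section
/- Fix an integer c ≥ 2 and let G be a finite double tree with no c-balanced double tree decomposition that has the minimum number of vertices among all such double trees. Let v be a vertex of G of degree 3, let G = T1 ⊔ T2 be a double tree decomposition, and suppose v is a leaf of T2 with vb ∈ E(T2) its unique incident edge in T2. Then b is big. -/
/-- A multigraph without loops: edges `E` with an endpoint map into unordered
pairs of vertices, no edge being a loop. -/
structure Multigraph (V : Type*) (E : Type*) where
  ends : E → Sym2 V
  loopless : ∀ e, ¬ (ends e).IsDiag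

namespace Multigraph

variable {V E : Type*}

/-- `a` and `b` are joined by an edge belonging to the edge set `S`. -/
def Adj (G : Multigraph V E) (S : Set E) (a b : V) : Prop :=
  ∃ e ∈ S, G.ends e = s(a, b)

/-- Reachability in the spanning subgraph with edge set `S`. -/
def Reachable (G : Multigraph V E) (S : Set E) (a b : V) : Prop :=
  Relation.ReflTransGen (G.Adj S) a b

/-- The spanning subgraph with edge set `S` is connected. -/
def Connected (G : Multigraph V E) (S : Set E) : Prop :=
  ∀ a b : V, G.Reachable S a b

/-- The spanning subgraph with edge set `S` is acyclic: every edge of `S`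
is a bridge of `S`. -/
def Acyclic (G : Multigraph V E) (S : Set E) : Prop :=
  ∀ e ∈ S, ∀ a b : V, G.ends e = s(a, b) → ¬ G.Reachable (S \ {e}) a b

/-- `S` is the edge set of a spanning tree: connected and acyclic. -/
def IsSpanningTree (G : Multigraph V E) (S : Set E) : Prop :=
  G.Connected S ∧ G.Acyclic S

/-- The edges of `S` incident to `v`. -/
def incEdges (G : Multigraph V E) (S : Set E) (v : V) : Set E :=
  {e ∈ S | v ∈ G.ends e}

/-- The degree of `v` in the spanning subgraph with edge set `S`. -/
noncomputable def deg (G : Multigraph V E) (S : Set E) (v : V) : ℕ :=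
  (G.incEdges S v).ncard

/-- `T1, T2` form a double tree decomposition of `G`: they partition the
edges of `G` and are both spanning trees. -/
def IsDTD (G : Multigraph V E) (T1 T2 : Set E) : Prop :=
  T1 ∪ T2 = Set.univ ∧ Disjoint T1 T2 ∧ G.IsSpanningTree T1 ∧ G.IsSpanningTree T2

/-- `G` is a double tree: the edge-disjoint union of two spanning trees. -/
def IsDoubleTree (G : Multigraph V E) : Prop :=
  ∃ T1 T2, G.IsDTD T1 T2

/-- A decomposition into two spanning subgraphs is `c`-balanced if at each
vertex the two degrees differ by at most `c`. -/
def Balanced (G : Multigraph V E) (c : ℕ) (S1 S2 : Set E) : Prop :=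
  ∀ v : V, |(G.deg S1 v : ℤ) - (G.deg S2 v : ℤ)| ≤ (c : ℤ)

end Multigraph

namespace Multigraph

variable {V E : Type*}

/-- `G` admits no `c`-balanced double tree decomposition. -/
def NoBalancedDTD (c : ℕ) (G : Multigraph V E) : Prop :=
  ¬ ∃ T1 T2 : Set E, G.IsDTD T1 T2 ∧ G.Balanced c T1 T2

/-- `v` is big: its degree exceeds `c + 2`. -/
def Big (G : Multigraph V E) (c : ℕ) (v : V) : Prop :=
  c + 2 < G.deg Set.univ v

/-- `v` is small: its degree is at most `c + 2`. -/
def Small (G : Multigraph V E) (c : ℕ) (v : V) : Prop :=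
  G.deg Set.univ v ≤ c + 2

/-- `u` and `z` are joined by a double edge. -/
def DoubleEdge (G : Multigraph V E) (u z : V) : Prop :=
  ∃ e1 e2 : E, e1 ≠ e2 ∧ G.ends e1 = s(u, z) ∧ G.ends e2 = s(u, z)

/-- `u` is a bad 3-vertex: it has degree 3, a small neighbour, and is joined
to a big vertex by a double edge. -/
def Bad3 (G : Multigraph V E) (c : ℕ) (u : V) : Prop :=
  G.deg Set.univ u = 3 ∧
  (∃ w, G.Adj Set.univ u w ∧ G.Small c w) ∧
  (∃ z, G.DoubleEdge u z ∧ G.Big c z)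

/-- `u` is a poor 3-vertex: it has degree 3 and three distinct neighbours,
two big and one small. -/
def Poor3 (G : Multigraph V E) (c : ℕ) (u : V) : Prop :=
  G.deg Set.univ u = 3 ∧
  ∃ x y s : V, x ≠ y ∧ x ≠ s ∧ y ≠ s ∧
    G.Adj Set.univ u x ∧ G.Adj Set.univ u y ∧ G.Adj Set.univ u s ∧
    G.Big c x ∧ G.Big c y ∧ G.Small c s

end Multigraph


namespace Multigraph

variable {V E : Type*}

private lemma sym2_rep {α : Type*} (z : Sym2 α) : ∃ p q, z = s(p, q) :=
  Sym2.ind (fun a b => ⟨a, b, rfl⟩) z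

lemma adj_symm' (G : Multigraph V E) {S : Set E} {a b : V} (h : G.Adj S a b) :
    G.Adj S b a := by
  obtain ⟨f, hf, hends⟩ := h
  exact ⟨f, hf, by rw [hends, Sym2.eq_swap]⟩

lemma reach_symm (G : Multigraph V E) {S : Set E} {a b : V}
    (h : G.Reachable S a b) : G.Reachable S b a :=
  (@Relation.ReflTransGen.stdSymm _ _ ⟨fun _ _ hh => G.adj_symm' hh⟩).symm _ _ h

lemma reach_single (G : Multigraph V E) {S : Set E} {a b : V} (h : G.Adj S a b) :
    G.Reachable S a b := Relation.ReflTransGen.single h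

lemma reach_isolated (G : Multigraph V E) {S : Set E} {a b : V}
    (hiso : ∀ f ∈ S, a ∉ G.ends f) (h : G.Reachable S a b) : a = b := by
  rcases h.cases_head with h | ⟨c, ⟨f, hf, hends⟩, _⟩
  · exact h
  · exact absurd (show a ∈ G.ends f by rw [hends]; simp) (hiso f hf)

lemma ne_of_ends (G : Multigraph V E) {f : E} {a b : V}
    (h : G.ends f = s(a, b)) : a ≠ b :=
  fun hab => G.loopless f (by rw [h]; exact Sym2.mk_isDiag_iff.mpr hab)

lemma mem_incEdges {G : Multigraph V E} {S : Set E} {u : V} {f : E} :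
    f ∈ G.incEdges S u ↔ f ∈ S ∧ u ∈ G.ends f := Iff.rfl

lemma deg_union (G : Multigraph V E) [Finite E] {S T : Set E} (h : Disjoint S T) (u : V) :
    G.deg (S ∪ T) u = G.deg S u + G.deg T u := by
  have he : G.incEdges (S ∪ T) u = G.incEdges S u ∪ G.incEdges T u := by
    ext f; simp only [mem_incEdges, Set.mem_union]; tauto
  have hd : Disjoint (G.incEdges S u) (G.incEdges T u) :=
    h.mono (fun f hf => hf.1) (fun f hf => hf.1)
  rw [deg, he, Set.ncard_union_eq hd (Set.toFinite _) (Set.toFinite _)]; rfl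

lemma one_le_deg (G : Multigraph V E) [Finite E] {S : Set E} {u w : V}
    (hconn : G.Connected S) (hw : w ≠ u) : 1 ≤ G.deg S u := by
  rcases (hconn u w).cases_head with h | ⟨c, ⟨f, hf, hends⟩, _⟩
  · exact absurd h.symm hw
  · have hmem : f ∈ G.incEdges S u := ⟨hf, by rw [hends]; simp⟩
    exact (Set.ncard_pos (Set.toFinite _)).mpr ⟨f, hmem⟩

end Multigraph

namespace Multigraph

section Surgery

variable {V E V' E' : Type*}
variable (G : Multigraph V E) (G' : Multigraph V' E')
variable (π : V → V') (ι : E' → E)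
variable (v b x y : V) (e e1 e2 : E) (e2' : E')

/-- Hypothesis bundle relating `G'` (the graph with `v` suppressed) to `G`. -/
structure SurgeryData : Prop where
  πinj : ∀ u w : V, u ≠ v → w ≠ v → π u = π w → u = w
  πsurj : ∀ u' : V', ∃ u : V, u ≠ v ∧ π u = u'
  ιinj : Function.Injective ι
  ιrange : Set.range ι = {g : E | g ≠ e ∧ g ≠ e1}
  ιe2 : ι e2' = e2
  ends' : ∀ f : E', ι f ≠ e2 → G'.ends f = Sym2.map π (G.ends (ι f))
  ends2' : G'.ends e2' = s(π x, π y)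
  ende : G.ends e = s(v, b)
  ende1 : G.ends e1 = s(v, x)
  ende2 : G.ends e2 = s(v, y)
  hbv : b ≠ v
  hxv : x ≠ v
  hyv : y ≠ v
  hxy : x ≠ y
  hinc : G.incEdges Set.univ v = {e, e1, e2}
  hee1 : e ≠ e1
  hee2 : e ≠ e2
  h12 : e1 ≠ e2

variable {G G' π ι v b x y e e1 e2 e2'}

namespace SurgeryData

variable (D : SurgeryData G G' π ι v b x y e e1 e2 e2')

include D

lemma notmem_v {f : E'} (hf : ι f ≠ e2) : v ∉ G.ends (ι f) := by
  intro hv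
  have hmem : ι f ∈ G.incEdges Set.univ v := ⟨trivial, hv⟩
  rw [D.hinc] at hmem
  have h1 : ι f ≠ e := ((D.ιrange ▸ Set.mem_range_self f) : ι f ∈ {g : E | g ≠ e ∧ g ≠ e1}).1
  have h2 : ι f ≠ e1 := ((D.ιrange ▸ Set.mem_range_self f) : ι f ∈ {g : E | g ≠ e ∧ g ≠ e1}).2
  simp only [Set.mem_insert_iff, Set.mem_singleton_iff] at hmem
  tauto

lemma up {f : E'} {a c : V} (hf : ι f ≠ e2) (h : G.ends (ι f) = s(a, c)) :
    G'.ends f = s(π a, π c) := by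
  rw [D.ends' f hf, h, Sym2.map_pair_eq]

lemma down {f : E'} {a' c' : V'} (hf : ι f ≠ e2) (h : G'.ends f = s(a', c')) :
    ∃ a c : V, a ≠ v ∧ c ≠ v ∧ π a = a' ∧ π c = c' ∧ G.ends (ι f) = s(a, c) := by
  obtain ⟨p, q, hpq⟩ := sym2_rep (G.ends (ι f))
  have hpv : p ≠ v := fun hh => D.notmem_v hf (by rw [hpq, hh]; simp)
  have hqv : q ≠ v := fun hh => D.notmem_v hf (by rw [hpq, hh]; simp)
  have hmap : s(π p, π q) = s(a', c') := by
    rw [← Sym2.map_pair_eq π, ← hpq, ← D.ends' f hf, h]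
  rcases Sym2.eq_iff.mp hmap with ⟨h1, h2⟩ | ⟨h1, h2⟩
  · exact ⟨p, q, hpv, hqv, h1, h2, hpq⟩
  · exact ⟨q, p, hqv, hpv, h2, h1, by rw [hpq, Sym2.eq_swap]⟩

/-- `u` incidence transfers for edges other than `e2'`. -/
lemma mem_ends_iff {f : E'} {u : V} (hf : ι f ≠ e2) (hu : u ≠ v) :
    u ∈ G.ends (ι f) ↔ π u ∈ G'.ends f := by
  obtain ⟨p, q, hpq⟩ := sym2_rep (G.ends (ι f))
  have hpv : p ≠ v := fun hh => D.notmem_v hf (by rw [hpq, hh]; simp)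
  have hqv : q ≠ v := fun hh => D.notmem_v hf (by rw [hpq, hh]; simp)
  rw [D.ends' f hf, hpq, Sym2.map_pair_eq, Sym2.mem_iff, Sym2.mem_iff]
  constructor
  · rintro (rfl | rfl); exacts [Or.inl rfl, Or.inr rfl]
  · rintro (h | h)
    exacts [Or.inl (D.πinj u p hu hpv h), Or.inr (D.πinj u q hu hqv h)]

end SurgeryData

end Surgery

end Multigraph

namespace Multigraph

namespace SurgeryData

variable {V E V' E' : Type*}
variable {G : Multigraph V E} {G' : Multigraph V' E'}
variable {π : V → V'} {ι : E' → E}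
variable {v b x y : V} {e e1 e2 : E} {e2' : E'}
variable (D : SurgeryData G G' π ι v b x y e e1 e2 e2')

include D

lemma isDTD_pullback (T1 T2 : Set E) (hDTD : G.IsDTD T1 T2)
    (heT2 : e ∈ T2) (he1T1 : e1 ∈ T1) (he2T1 : e2 ∈ T1) :
    G'.IsDTD (ι ⁻¹' T1) (ι ⁻¹' T2) := by
  obtain ⟨huniv, hdisj, ⟨hc1, ha1⟩, ⟨hc2, ha2⟩⟩ := hDTD
  have hvT2 : ∀ f ∈ T2, v ∈ G.ends f → f = e := by
    intro f hf hv
    have hmem : f ∈ G.incEdges Set.univ v := ⟨trivial, hv⟩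
    rw [D.hinc] at hmem
    simp only [Set.mem_insert_iff, Set.mem_singleton_iff] at hmem
    rcases hmem with rfl | rfl | rfl
    · rfl
    · exact absurd hf (Set.disjoint_left.mp hdisj he1T1)
    · exact absurd hf (Set.disjoint_left.mp hdisj he2T1)
  have hvT1 : ∀ f ∈ T1, v ∈ G.ends f → f = e1 ∨ f = e2 := by
    intro f hf hv
    have hmem : f ∈ G.incEdges Set.univ v := ⟨trivial, hv⟩
    rw [D.hinc] at hmem
    simp only [Set.mem_insert_iff, Set.mem_singleton_iff] at hmem
    rcases hmem with h | h | h
    · exact absurd (show f ∈ T2 by rw [h]; exact heT2) (Set.disjoint_left.mp hdisj hf)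
    · exact Or.inl h
    · exact Or.inr h
  -- connectivity transfer for T2
  have R1 : ∀ a cc : V, a ≠ v → G.Reachable T2 a cc →
      (cc ≠ v → G'.Reachable (ι ⁻¹' T2) (π a) (π cc)) ∧
      (cc = v → G'.Reachable (ι ⁻¹' T2) (π a) (π b)) := by
    intro a cc hav hr
    induction hr with
    | refl => exact ⟨fun _ => .refl, fun hcv => absurd hcv hav⟩
    | @tail c d hac hstep ih =>
      obtain ⟨f, hfT2, hf⟩ := hstep
      by_cases hdv : d = v
      · refine ⟨fun h => absurd hdv h, fun _ => ?_⟩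
        have hfe : f = e := hvT2 f hfT2 (by rw [hf, hdv]; simp)
        have hsv : s(v, b) = s(c, v) := by rw [← D.ende, ← hfe, ← hdv, ← hf]
        have hcb : c = b := by
          rcases Sym2.eq_iff.mp hsv with ⟨h1, h2⟩ | ⟨h1, h2⟩
          · exact absurd h2 D.hbv
          · exact h2.symm
        have := ih.1 (by rw [hcb]; exact D.hbv)
        rwa [hcb] at this
      · refine ⟨fun _ => ?_, fun h => absurd h hdv⟩
        by_cases hcv : c = v
        · have hfe : f = e := hvT2 f hfT2 (by rw [hf, hcv]; simp)
          have hsv : s(v, b) = s(v, d) := by rw [← D.ende, ← hfe, hf, hcv]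
          have hdb : d = b := by
            rcases Sym2.eq_iff.mp hsv with ⟨h1, h2⟩ | ⟨h1, h2⟩
            · exact h2.symm
            · exact absurd h2 D.hbv
          rw [hdb]; exact ih.2 hcv
        · have hfne : f ≠ e ∧ f ≠ e1 := by
            constructor
            · intro hh
              have hsv : s(v, b) = s(c, d) := by rw [← D.ende, ← hh, hf]
              rcases Sym2.eq_iff.mp hsv with ⟨h1, _⟩ | ⟨h1, _⟩
              · exact hcv h1.symm
              · exact hdv h1.symm
            · intro hh
              exact Set.disjoint_left.mp hdisj
                (show f ∈ T1 by rw [hh]; exact he1T1) hfT2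
          obtain ⟨f', rfl⟩ : f ∈ Set.range ι := by rw [D.ιrange]; exact hfne
          have hne2 : ι f' ≠ e2 := fun hh =>
            Set.disjoint_left.mp hdisj (by rw [hh]; exact he2T1) hfT2
          exact (ih.1 hcv).tail ⟨f', hfT2, D.up hne2 hf⟩
  -- connectivity transfer for T1
  have R2 : ∀ a cc : V, a ≠ v → G.Reachable T1 a cc →
      (cc ≠ v → G'.Reachable (ι ⁻¹' T1) (π a) (π cc)) ∧
      (cc = v → G'.Reachable (ι ⁻¹' T1) (π a) (π x)) := by
    intro a cc hav hr
    have hstep_e2' : ∀ p' q' : V', G'.ends e2' = s(p', q') → e2 ∈ T1 →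
        G'.Adj (ι ⁻¹' T1) p' q' := fun p' q' hpq _ =>
      ⟨e2', show ι e2' ∈ T1 by rw [D.ιe2]; exact he2T1, hpq⟩
    induction hr with
    | refl => exact ⟨fun _ => .refl, fun hcv => absurd hcv hav⟩
    | @tail c d hac hstep ih =>
      obtain ⟨f, hfT1, hf⟩ := hstep
      by_cases hdv : d = v
      · refine ⟨fun h => absurd hdv h, fun _ => ?_⟩
        rcases hvT1 f hfT1 (by rw [hf, hdv]; simp) with hfe | hfe
        · have hsv : s(v, x) = s(c, v) := by rw [← D.ende1, ← hfe, ← hdv, ← hf]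
          have hcx : c = x := by
            rcases Sym2.eq_iff.mp hsv with ⟨h1, h2⟩ | ⟨h1, h2⟩
            · exact absurd h2 D.hxv
            · exact h2.symm
          have := ih.1 (by rw [hcx]; exact D.hxv)
          rwa [hcx] at this
        · have hsv : s(v, y) = s(c, v) := by rw [← D.ende2, ← hfe, ← hdv, ← hf]
          have hcy : c = y := by
            rcases Sym2.eq_iff.mp hsv with ⟨h1, h2⟩ | ⟨h1, h2⟩
            · exact absurd h2 D.hyv
            · exact h2.symm
          have hy := ih.1 (by rw [hcy]; exact D.hyv)
          rw [hcy] at hy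
          exact hy.tail (hstep_e2' (π y) (π x)
            (by rw [D.ends2']; exact Sym2.eq_swap) he2T1)
      · refine ⟨fun _ => ?_, fun h => absurd h hdv⟩
        by_cases hcv : c = v
        · rcases hvT1 f hfT1 (by rw [hf, hcv]; simp) with hfe | hfe
          · have hsv : s(v, x) = s(v, d) := by rw [← D.ende1, ← hfe, hf, hcv]
            have hdx : d = x := by
              rcases Sym2.eq_iff.mp hsv with ⟨h1, h2⟩ | ⟨h1, h2⟩
              · exact h2.symm
              · exact absurd h1.symm hdv
            rw [hdx]; exact ih.2 hcv
          · have hsv : s(v, y) = s(v, d) := by rw [← D.ende2, ← hfe, hf, hcv]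
            have hdy : d = y := by
              rcases Sym2.eq_iff.mp hsv with ⟨h1, h2⟩ | ⟨h1, h2⟩
              · exact h2.symm
              · exact absurd h1.symm hdv
            rw [hdy]
            exact (ih.2 hcv).tail (hstep_e2' (π x) (π y) D.ends2' he2T1)
        · have hfne1 : f ≠ e1 := by
            intro hh
            have hsv : s(v, x) = s(c, d) := by rw [← D.ende1, ← hh, hf]
            rcases Sym2.eq_iff.mp hsv with ⟨h1, _⟩ | ⟨h1, _⟩
            · exact hcv h1.symm
            · exact hdv h1.symm
          have hfne2 : f ≠ e2 := by
            intro hh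
            have hsv : s(v, y) = s(c, d) := by rw [← D.ende2, ← hh, hf]
            rcases Sym2.eq_iff.mp hsv with ⟨h1, _⟩ | ⟨h1, _⟩
            · exact hcv h1.symm
            · exact hdv h1.symm
          have hfe : f ≠ e := fun hh =>
            Set.disjoint_left.mp hdisj hfT1 (by rw [hh]; exact heT2)
          obtain ⟨f', rfl⟩ : f ∈ Set.range ι := by rw [D.ιrange]; exact ⟨hfe, hfne1⟩
          exact (ih.1 hcv).tail ⟨f', hfT1, D.up hfne2 hf⟩
  refine ⟨?_, ?_, ⟨?_, ?_⟩, ⟨?_, ?_⟩⟩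
  · ext f
    have : ι f ∈ T1 ∪ T2 := by rw [huniv]; trivial
    simpa using this
  · exact Set.disjoint_left.mpr fun f hf1 hf2 => Set.disjoint_left.mp hdisj hf1 hf2
  · -- Connected T1'
    intro a' c'
    obtain ⟨a, hav, rfl⟩ := D.πsurj a'
    obtain ⟨cc, hcv, rfl⟩ := D.πsurj c'
    exact (R2 a cc hav (hc1 a cc)).1 hcv
  · -- Acyclic T1'
    intro f hf a' c' hAends hreach
    have C1 : ∀ p' q' : V', G'.Reachable (ι ⁻¹' T1 \ {f}) p' q' →
        ∀ p, p ≠ v → π p = p' → ∀ q, q ≠ v → π q = q' →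
        G.Reachable (T1 \ {ι f}) p q := by
      intro p' q' h
      induction h with
      | refl =>
        intro p hp hpp q hq hqq
        have : p = q := D.πinj p q hp hq (by rw [hpp, hqq])
        exact this ▸ Relation.ReflTransGen.refl
      | @tail m' q' hpm hstep ih =>
        intro p hp hpp q hq hqq
        obtain ⟨g, hg, hge⟩ := hstep
        have hgT1 : ι g ∈ T1 := hg.1
        have hgιf : ι g ≠ ι f := fun hh => hg.2 (by simpa using D.ιinj hh)
        by_cases hgne2 : ι g = e2
        · -- g = e2', step between π x and π y
          have hge2' : g = e2' := D.ιinj (by rw [hgne2, D.ιe2])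
          subst hge2'
          rw [D.ends2'] at hge
          have he1mem : e1 ∈ T1 \ {ι f} := ⟨he1T1, by
            simp only [Set.mem_singleton_iff]
            intro hh
            have : ι f ∈ Set.range ι := Set.mem_range_self f
            rw [D.ιrange] at this
            exact this.2 hh.symm⟩
          have he2mem : e2 ∈ T1 \ {ι f} := ⟨he2T1, by
            simp only [Set.mem_singleton_iff]
            intro hh; exact hgιf (by rw [D.ιe2, hh])⟩
          rcases Sym2.eq_iff.mp hge with ⟨h1, h2⟩ | ⟨h1, h2⟩
          · -- m' = π x, q' = π y
            have hq2 : q = y := D.πinj q y hq D.hyv (by rw [hqq, ← h2])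
            have hmid := ih p hp hpp x D.hxv h1
            subst hq2
            exact (hmid.tail ⟨e1, he1mem, by rw [D.ende1]; exact Sym2.eq_swap⟩).tail
              ⟨e2, he2mem, D.ende2⟩
          · -- m' = π y, q' = π x
            have hq2 : q = x := D.πinj q x hq D.hxv (by rw [hqq, ← h1])
            have hmid := ih p hp hpp y D.hyv h2
            subst hq2
            exact (hmid.tail ⟨e2, he2mem, by rw [D.ende2]; exact Sym2.eq_swap⟩).tail
              ⟨e1, he1mem, D.ende1⟩
        · obtain ⟨mm, qq, hmv, hqv2, hπm, hπq, hg2⟩ := D.down hgne2 hge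
          have hqq2 : qq = q := D.πinj qq q hqv2 hq (by rw [hπq, hqq])
          exact (ih p hp hpp mm hmv hπm).tail
            ⟨ι g, ⟨hgT1, by simpa using hgιf⟩, hqq2 ▸ hg2⟩
    by_cases hfe2 : ι f = e2
    · have hfe2' : f = e2' := D.ιinj (by rw [hfe2, D.ιe2])
      subst hfe2'
      rw [D.ends2'] at hAends
      have chain : G.Reachable (T1 \ {e2}) x y := by
        rcases Sym2.eq_iff.mp hAends with ⟨h1, h2⟩ | ⟨h1, h2⟩
        · exact D.ιe2 ▸ C1 a' c' hreach x D.hxv h1 y D.hyv h2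
        · exact G.reach_symm (D.ιe2 ▸ C1 a' c' hreach y D.hyv h2 x D.hxv h1)
      have he1mem : e1 ∈ T1 \ {e2} := ⟨he1T1, by simpa using D.h12⟩
      exact ha1 e2 he2T1 v y D.ende2
        (Relation.ReflTransGen.head ⟨e1, he1mem, D.ende1⟩ chain)
    · obtain ⟨a, cdum, hav, hcv, hπa, hπc, hg2⟩ := D.down hfe2 hAends
      exact ha1 (ι f) hf a cdum hg2 (C1 a' c' hreach a hav hπa cdum hcv hπc)
  · -- Connected T2'
    intro a' c'
    obtain ⟨a, hav, rfl⟩ := D.πsurj a'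
    obtain ⟨cc, hcv, rfl⟩ := D.πsurj c'
    exact (R1 a cc hav (hc2 a cc)).1 hcv
  · -- Acyclic T2'
    intro f hf a' c' hAends hreach
    have hfe2 : ι f ≠ e2 := fun hh =>
      Set.disjoint_left.mp hdisj (by rw [hh]; exact he2T1) hf
    have C2 : ∀ p' q' : V', G'.Reachable (ι ⁻¹' T2 \ {f}) p' q' →
        ∀ p, p ≠ v → π p = p' → ∀ q, q ≠ v → π q = q' →
        G.Reachable (T2 \ {ι f}) p q := by
      intro p' q' h
      induction h with
      | refl =>
        intro p hp hpp q hq hqq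
        have : p = q := D.πinj p q hp hq (by rw [hpp, hqq])
        exact this ▸ Relation.ReflTransGen.refl
      | @tail m' q' hpm hstep ih =>
        intro p hp hpp q hq hqq
        obtain ⟨g, hg, hge⟩ := hstep
        have hgT2 : ι g ∈ T2 := hg.1
        have hgιf : ι g ≠ ι f := fun hh => hg.2 (by simpa using D.ιinj hh)
        have hgne2 : ι g ≠ e2 := fun hh =>
          Set.disjoint_left.mp hdisj (by rw [hh]; exact he2T1) hgT2
        obtain ⟨mm, qq, hmv, hqv2, hπm, hπq, hg2⟩ := D.down hgne2 hge
        have hqq2 : qq = q := D.πinj qq q hqv2 hq (by rw [hπq, hqq])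
        exact (ih p hp hpp mm hmv hπm).tail
          ⟨ι g, ⟨hgT2, by simpa using hgιf⟩, hqq2 ▸ hg2⟩
    obtain ⟨a, cdum, hav, hcv, hπa, hπc, hg2⟩ := D.down hfe2 hAends
    exact ha2 (ι f) hf a cdum hg2 (C2 a' c' hreach a hav hπa cdum hcv hπc)

end SurgeryData

end Multigraph

namespace Multigraph

namespace SurgeryData

variable {V E V' E' : Type*} [Finite E] [Finite E']
variable {G : Multigraph V E} {G' : Multigraph V' E'}
variable {π : V → V'} {ι : E' → E}
variable {v b x y : V} {e e1 e2 : E} {e2' : E'}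
variable (D : SurgeryData G G' π ι v b x y e e1 e2 e2')

include D

lemma lift (c : ℕ) (hc : 2 ≤ c) (S1' S2' : Set E')
    (hS : G'.IsDTD S1' S2') (hBal : G'.Balanced c S1' S2')
    (he2S1 : e2' ∈ S1') (hdegb : G.deg Set.univ b ≤ c + 2) :
    ∃ U1 U2 : Set E, G.IsDTD U1 U2 ∧ G.Balanced c U1 U2 := by
  classical
  obtain ⟨huniv', hdisj', ⟨hc1', ha1'⟩, ⟨hc2', ha2'⟩⟩ := hS
  set U1 : Set E := ι '' S1' ∪ {e1} with hU1def
  set U2 : Set E := ι '' S2' ∪ {e} with hU2def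
  have hrange : ∀ f : E', ι f ≠ e ∧ ι f ≠ e1 := fun f =>
    (D.ιrange ▸ Set.mem_range_self f : ι f ∈ {g : E | g ≠ e ∧ g ≠ e1})
  have henotU1 : e ∉ U1 := by
    rintro (⟨f, _, hfe⟩ | hh)
    · exact (hrange f).1 hfe
    · exact D.hee1 hh
  have he1notU2 : e1 ∉ U2 := by
    rintro (⟨f, _, hfe⟩ | hh)
    · exact (hrange f).2 hfe
    · exact D.hee1 hh.symm
  have he2U1 : e2 ∈ U1 := Or.inl ⟨e2', he2S1, D.ιe2⟩
  have he2'notS2 : e2' ∉ S2' := Set.disjoint_left.mp hdisj' he2S1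
  have hS2ne2 : ∀ f ∈ S2', ι f ≠ e2 := by
    intro f hf hh
    have hfe : f = e2' := D.ιinj (by rw [hh, D.ιe2])
    exact he2'notS2 (hfe ▸ hf)
  have he2notU2 : e2 ∉ U2 := by
    rintro (⟨f, hf, hfe⟩ | hh)
    · exact hS2ne2 f hf hfe
    · exact D.hee2 hh.symm
  have he1U1 : e1 ∈ U1 := Or.inr rfl
  have heU2 : e ∈ U2 := Or.inr rfl
  -- incident edges of `v`
  have hvU : ∀ h : E, v ∈ G.ends h → h = e ∨ h = e1 ∨ h = e2 := by
    intro h hv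
    have hmem : h ∈ G.incEdges Set.univ v := ⟨trivial, hv⟩
    rw [D.hinc] at hmem
    simpa using hmem
  -- union and disjointness
  have hU : U1 ∪ U2 = Set.univ := by
    ext g
    simp only [Set.mem_univ, iff_true]
    by_cases hge : g = e
    · exact Or.inr (Or.inr hge)
    · by_cases hge1 : g = e1
      · exact Or.inl (Or.inr hge1)
      · obtain ⟨f, rfl⟩ : g ∈ Set.range ι := by rw [D.ιrange]; exact ⟨hge, hge1⟩
        have : f ∈ S1' ∪ S2' := by rw [huniv']; trivial
        rcases this with hf | hf
        · exact Or.inl (Or.inl ⟨f, hf, rfl⟩)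
        · exact Or.inr (Or.inl ⟨f, hf, rfl⟩)
  have hD : Disjoint U1 U2 := by
    rw [Set.disjoint_left]
    rintro g (⟨f, hf, rfl⟩ | hg1) hg2
    · rcases hg2 with ⟨f2, hf2, hfe⟩ | hg2
      · exact Set.disjoint_left.mp hdisj' hf (D.ιinj hfe.symm ▸ hf2)
      · exact (hrange f).1 hg2
    · rcases hg2 with ⟨f2, hf2, hfe⟩ | hg2
      · exact (hrange f2).2 (hfe.trans hg1)
      · exact D.hee1 (hg2.symm.trans hg1)
  -- reachability transfer G' → G for U1
  have CU1 : ∀ p' q' : V', G'.Reachable S1' p' q' →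
      ∀ p, p ≠ v → π p = p' → ∀ q, q ≠ v → π q = q' → G.Reachable U1 p q := by
    intro p' q' h
    induction h with
    | refl =>
      intro p hp hpp q hq hqq
      have : p = q := D.πinj p q hp hq (by rw [hpp, hqq])
      exact this ▸ Relation.ReflTransGen.refl
    | @tail m' q' hpm hstep ih =>
      intro p hp hpp q hq hqq
      obtain ⟨g, hgS1, hge⟩ := hstep
      by_cases hgne2 : ι g = e2
      · have hge2' : g = e2' := D.ιinj (by rw [hgne2, D.ιe2])
        rw [hge2', D.ends2'] at hge
        rcases Sym2.eq_iff.mp hge with ⟨h1, h2⟩ | ⟨h1, h2⟩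
        · have hq2 : q = y := D.πinj q y hq D.hyv (by rw [hqq, ← h2])
          have hmid := ih p hp hpp x D.hxv h1
          rw [hq2]
          exact (hmid.tail ⟨e1, he1U1, by rw [D.ende1]; exact Sym2.eq_swap⟩).tail
            ⟨e2, he2U1, D.ende2⟩
        · have hq2 : q = x := D.πinj q x hq D.hxv (by rw [hqq, ← h1])
          have hmid := ih p hp hpp y D.hyv h2
          rw [hq2]
          exact (hmid.tail ⟨e2, he2U1, by rw [D.ende2]; exact Sym2.eq_swap⟩).tail
            ⟨e1, he1U1, D.ende1⟩
      · obtain ⟨mm, qq, hmv, hqv2, hπm, hπq, hg2⟩ := D.down hgne2 hge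
        have hqq2 : qq = q := D.πinj qq q hqv2 hq (by rw [hπq, hqq])
        exact (ih p hp hpp mm hmv hπm).tail ⟨ι g, Or.inl ⟨g, hgS1, rfl⟩, hqq2 ▸ hg2⟩
  -- reachability transfer G' → G for U2
  have CU2 : ∀ p' q' : V', G'.Reachable S2' p' q' →
      ∀ p, p ≠ v → π p = p' → ∀ q, q ≠ v → π q = q' → G.Reachable U2 p q := by
    intro p' q' h
    induction h with
    | refl =>
      intro p hp hpp q hq hqq
      have : p = q := D.πinj p q hp hq (by rw [hpp, hqq])
      exact this ▸ Relation.ReflTransGen.refl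
    | @tail m' q' hpm hstep ih =>
      intro p hp hpp q hq hqq
      obtain ⟨g, hgS2, hge⟩ := hstep
      obtain ⟨mm, qq, hmv, hqv2, hπm, hπq, hg2⟩ := D.down (hS2ne2 g hgS2) hge
      have hqq2 : qq = q := D.πinj qq q hqv2 hq (by rw [hπq, hqq])
      exact (ih p hp hpp mm hmv hπm).tail ⟨ι g, Or.inl ⟨g, hgS2, rfl⟩, hqq2 ▸ hg2⟩
  -- connectivity of U1 and U2
  have hconnU1 : G.Connected U1 := by
    have hreachv : ∀ u : V, G.Reachable U1 u v := by
      intro u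
      by_cases huv : u = v
      · rw [huv]; exact Relation.ReflTransGen.refl
      · exact (CU1 (π u) (π x) (hc1' (π u) (π x)) u huv rfl x D.hxv rfl).tail
          ⟨e1, he1U1, by rw [D.ende1]; exact Sym2.eq_swap⟩
    intro a c
    exact (hreachv a).trans (G.reach_symm (hreachv c))
  have hconnU2 : G.Connected U2 := by
    have hreachv : ∀ u : V, G.Reachable U2 u v := by
      intro u
      by_cases huv : u = v
      · rw [huv]; exact Relation.ReflTransGen.refl
      · exact (CU2 (π u) (π b) (hc2' (π u) (π b)) u huv rfl b D.hbv rfl).tail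
          ⟨e, heU2, by rw [D.ende]; exact Sym2.eq_swap⟩
    intro a c
    exact (hreachv a).trans (G.reach_symm (hreachv c))
  -- acyclicity of U2
  have hacyU2 : G.Acyclic U2 := by
    rintro g hgU2 p q hends hreach
    rcases hgU2 with ⟨f0, hf0, rfl⟩ | hge
    · -- g = ι f0 with f0 ∈ S2'
      have hf0ne2 : ι f0 ≠ e2 := hS2ne2 f0 hf0
      have hnov : v ∉ G.ends (ι f0) := D.notmem_v hf0ne2
      have hpv : p ≠ v := fun hh => hnov (by rw [hends, hh]; simp)
      have hqv : q ≠ v := fun hh => hnov (by rw [hends, hh]; simp)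
      have CB : ∀ a cc : V, a ≠ v → G.Reachable (U2 \ {ι f0}) a cc →
          (cc ≠ v → G'.Reachable (S2' \ {f0}) (π a) (π cc)) ∧
          (cc = v → G'.Reachable (S2' \ {f0}) (π a) (π b)) := by
        intro a cc hav hr
        induction hr with
        | refl => exact ⟨fun _ => .refl, fun hcv => absurd hcv hav⟩
        | @tail cm d hacm hstep ih =>
          obtain ⟨h, hhmem, hhe⟩ := hstep
          have hhU2 : h ∈ U2 := hhmem.1
          have hhnf0 : h ≠ ι f0 := by simpa using hhmem.2
          by_cases hdv : d = v
          · refine ⟨fun hh => absurd hdv hh, fun _ => ?_⟩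
            have hhe' : h = e := by
              rcases hvU h (by rw [hhe, hdv]; simp) with hh | hh | hh
              · exact hh
              · exact absurd (hh ▸ hhU2) he1notU2
              · exact absurd (hh ▸ hhU2) he2notU2
            have hsv : s(v, b) = s(cm, v) := by rw [← D.ende, ← hhe', ← hdv, ← hhe]
            have hcb : cm = b := by
              rcases Sym2.eq_iff.mp hsv with ⟨h1, h2⟩ | ⟨h1, h2⟩
              · exact absurd h2 D.hbv
              · exact h2.symm
            have := ih.1 (by rw [hcb]; exact D.hbv)
            rwa [hcb] at this
          · refine ⟨fun _ => ?_, fun hh => absurd hh hdv⟩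
            by_cases hcv : cm = v
            · have hhe' : h = e := by
                rcases hvU h (by rw [hhe, hcv]; simp) with hh | hh | hh
                · exact hh
                · exact absurd (hh ▸ hhU2) he1notU2
                · exact absurd (hh ▸ hhU2) he2notU2
              have hsv : s(v, b) = s(v, d) := by rw [← D.ende, ← hhe', hhe, hcv]
              have hdb : d = b := by
                rcases Sym2.eq_iff.mp hsv with ⟨h1, h2⟩ | ⟨h1, h2⟩
                · exact h2.symm
                · exact absurd h2 D.hbv
              rw [hdb]; exact ih.2 hcv
            · have hhne : h ≠ e := by
                intro hh
                have hsv : s(v, b) = s(cm, d) := by rw [← D.ende, ← hh, hhe]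
                rcases Sym2.eq_iff.mp hsv with ⟨h1, _⟩ | ⟨h1, _⟩
                · exact hcv h1.symm
                · exact hdv h1.symm
              have hhS2 : h ∈ ι '' S2' := by
                rcases hhU2 with hh | hh
                · exact hh
                · exact absurd hh hhne
              obtain ⟨f', hf', rfl⟩ := hhS2
              have hf'ne : f' ≠ f0 := fun hh => hhnf0 (by rw [hh])
              exact (ih.1 hcv).tail
                ⟨f', ⟨hf', by simpa using hf'ne⟩, D.up (hS2ne2 f' hf') hhe⟩
      have := (CB p q hpv hreach).1 hqv
      exact ha2' f0 hf0 (π p) (π q) (D.up hf0ne2 hends) this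
    · -- g = e
      rw [hge] at hends hreach
      have hvb : G.Reachable (U2 \ {e}) v b := by
        have hsv : s(v, b) = s(p, q) := by rw [← D.ende, hends]
        rcases Sym2.eq_iff.mp hsv with ⟨h1, h2⟩ | ⟨h1, h2⟩
        · rwa [← h1, ← h2] at hreach
        · rw [← h1, ← h2] at hreach
          exact G.reach_symm hreach
      have hiso : ∀ h ∈ U2 \ {e}, v ∉ G.ends h := by
        rintro h ⟨hhU2, hhne⟩ hv
        rcases hvU h hv with hh | hh | hh
        · exact hhne hh
        · exact he1notU2 (hh ▸ hhU2)
        · exact he2notU2 (hh ▸ hhU2)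
      exact D.hbv (G.reach_isolated hiso hvb).symm
  -- acyclicity of U1
  have hacyU1 : G.Acyclic U1 := by
    rintro g hgU1 p q hends hreach
    rcases hgU1 with ⟨f0, hf0, rfl⟩ | hge
    · by_cases hf0e2 : ι f0 = e2
      · -- removed edge is e2 = vy; use the path v -e1- x and acyclicity of S1' at e2'
        rw [hf0e2] at hends hreach
        have hvy : G.Reachable (U1 \ {e2}) v y := by
          have hsv : s(v, y) = s(p, q) := by rw [← D.ende2, hends]
          rcases Sym2.eq_iff.mp hsv with ⟨h1, h2⟩ | ⟨h1, h2⟩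
          · rwa [← h1, ← h2] at hreach
          · rw [← h1, ← h2] at hreach; exact G.reach_symm hreach
        rcases hvy.cases_head with heq | ⟨cm, ⟨h, hhmem, hhe⟩, hrest⟩
        · exact D.hyv heq.symm
        have hhe1 : h = e1 := by
          rcases hvU h (by rw [hhe]; simp) with hh | hh | hh
          · exact absurd (hh ▸ hhmem.1) henotU1
          · exact hh
          · exact absurd hh (by simpa using hhmem.2)
        have hcmx : cm = x := by
          have hsv : s(v, x) = s(v, cm) := by rw [← D.ende1, ← hhe1, hhe]
          rcases Sym2.eq_iff.mp hsv with ⟨h1, h2⟩ | ⟨h1, h2⟩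
          · exact h2.symm
          · exact absurd h2 D.hxv
        have CA2 : ∀ a cc : V, a ≠ v → G.Reachable (U1 \ {e2}) a cc →
            (cc ≠ v → G'.Reachable (S1' \ {e2'}) (π a) (π cc)) ∧
            (cc = v → G'.Reachable (S1' \ {e2'}) (π a) (π x)) := by
          intro a cc hav hr
          induction hr with
          | refl => exact ⟨fun _ => .refl, fun hcv => absurd hcv hav⟩
          | @tail cm2 d hacm hstep ih =>
            obtain ⟨h2, hh2mem, hh2e⟩ := hstep
            have hh2U1 : h2 ∈ U1 := hh2mem.1
            have hh2ne2 : h2 ≠ e2 := by simpa using hh2mem.2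
            by_cases hdv : d = v
            · refine ⟨fun hh => absurd hdv hh, fun _ => ?_⟩
              have hh2e1 : h2 = e1 := by
                rcases hvU h2 (by rw [hh2e, hdv]; simp) with hh | hh | hh
                · exact absurd (hh ▸ hh2U1) henotU1
                · exact hh
                · exact absurd hh hh2ne2
              have hsv : s(v, x) = s(cm2, v) := by
                rw [← D.ende1, ← hh2e1, ← hdv, ← hh2e]
              have hcx : cm2 = x := by
                rcases Sym2.eq_iff.mp hsv with ⟨h1, hb2⟩ | ⟨h1, hb2⟩
                · exact absurd hb2 D.hxv
                · exact hb2.symm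
              have := ih.1 (by rw [hcx]; exact D.hxv)
              rwa [hcx] at this
            · refine ⟨fun _ => ?_, fun hh => absurd hh hdv⟩
              by_cases hcv : cm2 = v
              · have hh2e1 : h2 = e1 := by
                  rcases hvU h2 (by rw [hh2e, hcv]; simp) with hh | hh | hh
                  · exact absurd (hh ▸ hh2U1) henotU1
                  · exact hh
                  · exact absurd hh hh2ne2
                have hsv : s(v, x) = s(v, d) := by rw [← D.ende1, ← hh2e1, hh2e, hcv]
                have hdx : d = x := by
                  rcases Sym2.eq_iff.mp hsv with ⟨h1, hb2⟩ | ⟨h1, hb2⟩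
                  · exact hb2.symm
                  · exact absurd hb2 D.hxv
                rw [hdx]; exact ih.2 hcv
              · have hh2ne1 : h2 ≠ e1 := by
                  intro hh
                  have hsv : s(v, x) = s(cm2, d) := by rw [← D.ende1, ← hh, hh2e]
                  rcases Sym2.eq_iff.mp hsv with ⟨h1, _⟩ | ⟨h1, _⟩
                  · exact hcv h1.symm
                  · exact hdv h1.symm
                have hh2ne : h2 ≠ e := fun hh => henotU1 (hh ▸ hh2U1)
                have hh2img : h2 ∈ ι '' S1' := by
                  rcases hh2U1 with hh | hh
                  · exact hh
                  · exact absurd hh hh2ne1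
                obtain ⟨f', hf', rfl⟩ := hh2img
                have hf'ne2 : f' ≠ e2' := fun hh => hh2ne2 (by rw [hh, D.ιe2])
                exact (ih.1 hcv).tail
                  ⟨f', ⟨hf', by simpa using hf'ne2⟩, D.up hh2ne2 hh2e⟩
        have hrest' : G.Reachable (U1 \ {e2}) x y := hcmx ▸ hrest
        exact ha1' e2' he2S1 (π x) (π y) D.ends2' ((CA2 x y D.hxv hrest').1 D.hyv)
      · -- removed edge avoids v
        have hnov : v ∉ G.ends (ι f0) := D.notmem_v hf0e2
        have hpv : p ≠ v := fun hh => hnov (by rw [hends, hh]; simp)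
        have hqv : q ≠ v := fun hh => hnov (by rw [hends, hh]; simp)
        have hf0ne2' : f0 ≠ e2' := fun hh => hf0e2 (by rw [hh, D.ιe2])
        have he2'mem : e2' ∈ S1' \ {f0} :=
          ⟨he2S1, by simpa using fun hh => hf0ne2' hh.symm⟩
        have CA3 : ∀ a cc : V, a ≠ v → G.Reachable (U1 \ {ι f0}) a cc →
            (cc ≠ v → G'.Reachable (S1' \ {f0}) (π a) (π cc)) ∧
            (cc = v → G'.Reachable (S1' \ {f0}) (π a) (π x) ∧
              G'.Reachable (S1' \ {f0}) (π a) (π y)) := by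
          intro a cc hav hr
          induction hr with
          | refl => exact ⟨fun _ => .refl, fun hcv => absurd hcv hav⟩
          | @tail cm2 d hacm hstep ih =>
            obtain ⟨h2, hh2mem, hh2e⟩ := hstep
            have hh2U1 : h2 ∈ U1 := hh2mem.1
            have hh2nf0 : h2 ≠ ι f0 := by simpa using hh2mem.2
            have hh2ne : h2 ≠ e := fun hh => henotU1 (hh ▸ hh2U1)
            by_cases hdv : d = v
            · refine ⟨fun hh => absurd hdv hh, fun _ => ?_⟩
              rcases hvU h2 (by rw [hh2e, hdv]; simp) with hh | hh | hh
              · exact absurd hh hh2ne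
              · -- via e1 from x
                have hsv : s(v, x) = s(cm2, v) := by rw [← D.ende1, ← hh, ← hdv, ← hh2e]
                have hcx : cm2 = x := by
                  rcases Sym2.eq_iff.mp hsv with ⟨h1, hb2⟩ | ⟨h1, hb2⟩
                  · exact absurd hb2 D.hxv
                  · exact hb2.symm
                have hr1 := ih.1 (by rw [hcx]; exact D.hxv)
                rw [hcx] at hr1
                exact ⟨hr1, hr1.tail ⟨e2', he2'mem, D.ends2'⟩⟩
              · -- via e2 from y
                have hsv : s(v, y) = s(cm2, v) := by rw [← D.ende2, ← hh, ← hdv, ← hh2e]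
                have hcy : cm2 = y := by
                  rcases Sym2.eq_iff.mp hsv with ⟨h1, hb2⟩ | ⟨h1, hb2⟩
                  · exact absurd hb2 D.hyv
                  · exact hb2.symm
                have hr2 := ih.1 (by rw [hcy]; exact D.hyv)
                rw [hcy] at hr2
                exact ⟨hr2.tail ⟨e2', he2'mem, by rw [D.ends2']; exact Sym2.eq_swap⟩, hr2⟩
            · refine ⟨fun _ => ?_, fun hh => absurd hh hdv⟩
              by_cases hcv : cm2 = v
              · rcases hvU h2 (by rw [hh2e, hcv]; simp) with hh | hh | hh
                · exact absurd hh hh2ne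
                · have hsv : s(v, x) = s(v, d) := by rw [← D.ende1, ← hh, hh2e, hcv]
                  have hdx : d = x := by
                    rcases Sym2.eq_iff.mp hsv with ⟨h1, hb2⟩ | ⟨h1, hb2⟩
                    · exact hb2.symm
                    · exact absurd hb2 D.hxv
                  rw [hdx]; exact (ih.2 hcv).1
                · have hsv : s(v, y) = s(v, d) := by rw [← D.ende2, ← hh, hh2e, hcv]
                  have hdy : d = y := by
                    rcases Sym2.eq_iff.mp hsv with ⟨h1, hb2⟩ | ⟨h1, hb2⟩
                    · exact hb2.symm
                    · exact absurd hb2 D.hyv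
                  rw [hdy]; exact (ih.2 hcv).2
              · have hh2ne1 : h2 ≠ e1 := by
                  intro hh
                  have hsv : s(v, x) = s(cm2, d) := by rw [← D.ende1, ← hh, hh2e]
                  rcases Sym2.eq_iff.mp hsv with ⟨h1, _⟩ | ⟨h1, _⟩
                  · exact hcv h1.symm
                  · exact hdv h1.symm
                have hh2ne2 : h2 ≠ e2 := by
                  intro hh
                  have hsv : s(v, y) = s(cm2, d) := by rw [← D.ende2, ← hh, hh2e]
                  rcases Sym2.eq_iff.mp hsv with ⟨h1, _⟩ | ⟨h1, _⟩
                  · exact hcv h1.symm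
                  · exact hdv h1.symm
                have hh2img : h2 ∈ ι '' S1' := by
                  rcases hh2U1 with hh | hh
                  · exact hh
                  · exact absurd hh hh2ne1
                obtain ⟨f', hf', rfl⟩ := hh2img
                have hf'nf0 : f' ≠ f0 := fun hh => hh2nf0 (by rw [hh])
                exact (ih.1 hcv).tail
                  ⟨f', ⟨hf', by simpa using hf'nf0⟩, D.up hh2ne2 hh2e⟩
        exact ha1' f0 hf0 (π p) (π q) (D.up hf0e2 hends)
          ((CA3 p q hpv hreach).1 hqv)
    · -- g = e1; use path v -e2- y and acyclicity of S1' at e2'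
      rw [hge] at hends hreach
      have hvx : G.Reachable (U1 \ {e1}) v x := by
        have hsv : s(v, x) = s(p, q) := by rw [← D.ende1, hends]
        rcases Sym2.eq_iff.mp hsv with ⟨h1, h2⟩ | ⟨h1, h2⟩
        · rwa [← h1, ← h2] at hreach
        · rw [← h1, ← h2] at hreach; exact G.reach_symm hreach
      rcases hvx.cases_head with heq | ⟨cm, ⟨h, hhmem, hhe⟩, hrest⟩
      · exact D.hxv heq.symm
      have hhe2 : h = e2 := by
        rcases hvU h (by rw [hhe]; simp) with hh | hh | hh
        · exact absurd (hh ▸ hhmem.1) henotU1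
        · exact absurd hh (by simpa using hhmem.2)
        · exact hh
      have hcmy : cm = y := by
        have hsv : s(v, y) = s(v, cm) := by rw [← D.ende2, ← hhe2, hhe]
        rcases Sym2.eq_iff.mp hsv with ⟨h1, h2⟩ | ⟨h1, h2⟩
        · exact h2.symm
        · exact absurd h2 D.hyv
      have CA1 : ∀ a cc : V, a ≠ v → G.Reachable (U1 \ {e1}) a cc →
          (cc ≠ v → G'.Reachable (S1' \ {e2'}) (π a) (π cc)) ∧
          (cc = v → G'.Reachable (S1' \ {e2'}) (π a) (π y)) := by
        intro a cc hav hr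
        induction hr with
        | refl => exact ⟨fun _ => .refl, fun hcv => absurd hcv hav⟩
        | @tail cm2 d hacm hstep ih =>
          obtain ⟨h2, hh2mem, hh2e⟩ := hstep
          have hh2U1 : h2 ∈ U1 := hh2mem.1
          have hh2ne1 : h2 ≠ e1 := by simpa using hh2mem.2
          have hh2ne : h2 ≠ e := fun hh => henotU1 (hh ▸ hh2U1)
          by_cases hdv : d = v
          · refine ⟨fun hh => absurd hdv hh, fun _ => ?_⟩
            have hh2e2 : h2 = e2 := by
              rcases hvU h2 (by rw [hh2e, hdv]; simp) with hh | hh | hh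
              · exact absurd hh hh2ne
              · exact absurd hh hh2ne1
              · exact hh
            have hsv : s(v, y) = s(cm2, v) := by rw [← D.ende2, ← hh2e2, ← hdv, ← hh2e]
            have hcy : cm2 = y := by
              rcases Sym2.eq_iff.mp hsv with ⟨h1, hb2⟩ | ⟨h1, hb2⟩
              · exact absurd hb2 D.hyv
              · exact hb2.symm
            have := ih.1 (by rw [hcy]; exact D.hyv)
            rwa [hcy] at this
          · refine ⟨fun _ => ?_, fun hh => absurd hh hdv⟩
            by_cases hcv : cm2 = v
            · have hh2e2 : h2 = e2 := by
                rcases hvU h2 (by rw [hh2e, hcv]; simp) with hh | hh | hh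
                · exact absurd hh hh2ne
                · exact absurd hh hh2ne1
                · exact hh
              have hsv : s(v, y) = s(v, d) := by rw [← D.ende2, ← hh2e2, hh2e, hcv]
              have hdy : d = y := by
                rcases Sym2.eq_iff.mp hsv with ⟨h1, hb2⟩ | ⟨h1, hb2⟩
                · exact hb2.symm
                · exact absurd hb2 D.hyv
              rw [hdy]; exact ih.2 hcv
            · have hh2ne2 : h2 ≠ e2 := by
                intro hh
                have hsv : s(v, y) = s(cm2, d) := by rw [← D.ende2, ← hh, hh2e]
                rcases Sym2.eq_iff.mp hsv with ⟨h1, _⟩ | ⟨h1, _⟩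
                · exact hcv h1.symm
                · exact hdv h1.symm
              have hh2img : h2 ∈ ι '' S1' := by
                rcases hh2U1 with hh | hh
                · exact hh
                · exact absurd hh hh2ne1
              obtain ⟨f', hf', rfl⟩ := hh2img
              have hf'ne2 : f' ≠ e2' := fun hh => hh2ne2 (by rw [hh, D.ιe2])
              exact (ih.1 hcv).tail
                ⟨f', ⟨hf', by simpa using hf'ne2⟩, D.up hh2ne2 hh2e⟩
      have hrest' : G.Reachable (U1 \ {e1}) y x := hcmy ▸ hrest
      exact ha1' e2' he2S1 (π x) (π y) D.ends2'
        (G'.reach_symm ((CA1 y x D.hyv hrest').1 D.hxv))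
  -- degree computations
  have hdegU1v : G.deg U1 v = 2 := by
    have hset : G.incEdges U1 v = {e1, e2} := by
      ext h
      constructor
      · rintro ⟨hh1, hh2⟩
        rcases hvU h hh2 with hh | hh | hh
        · exact absurd (hh ▸ hh1) henotU1
        · exact Or.inl hh
        · exact Or.inr hh
      · intro hh
        rcases hh with hh | hh
        · rw [hh]; exact ⟨he1U1, by rw [D.ende1]; simp⟩
        · rw [hh]; exact ⟨he2U1, by rw [D.ende2]; simp⟩
    show (G.incEdges U1 v).ncard = 2
    rw [hset]
    exact Set.ncard_pair D.h12
  have hdegU2v : G.deg U2 v = 1 := by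
    have hset : G.incEdges U2 v = {e} := by
      ext h
      constructor
      · rintro ⟨hh1, hh2⟩
        rcases hvU h hh2 with hh | hh | hh
        · exact hh
        · exact absurd (hh ▸ hh1) he1notU2
        · exact absurd (hh ▸ hh1) he2notU2
      · intro hh
        rw [hh]; exact ⟨heU2, by rw [D.ende]; simp⟩
    show (G.incEdges U2 v).ncard = 1
    rw [hset]
    exact Set.ncard_singleton e
  have hdegU1u : ∀ u : V, u ≠ v → G.deg U1 u = G'.deg S1' (π u) := by
    intro u huv
    set w : E := if u = x then e1 else e2 with hw
    set ψ : E' → E := Function.update ι e2' w with hψdef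
    have hψ1 : ψ e2' = w := Function.update_self e2' w ι
    have hψ2 : ∀ f : E', f ≠ e2' → ψ f = ι f := fun f hf =>
      Function.update_of_ne hf w ι
    have himg : ψ '' (G'.incEdges S1' (π u)) = G.incEdges U1 u := by
      ext h
      constructor
      · rintro ⟨f, ⟨hfS1, hfmem⟩, rfl⟩
        by_cases hfe2 : f = e2'
        · rw [hfe2, hψ1]
          rw [hfe2, D.ends2'] at hfmem
          have hux : u = x ∨ u = y := by
            rcases Sym2.mem_iff.mp hfmem with hh | hh
            · exact Or.inl (D.πinj u x huv D.hxv hh)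
            · exact Or.inr (D.πinj u y huv D.hyv hh)
          by_cases hx : u = x
          · rw [hw, if_pos hx]
            exact ⟨he1U1, by rw [D.ende1, hx]; simp⟩
          · have huy : u = y := hux.resolve_left hx
            rw [hw, if_neg hx]
            exact ⟨he2U1, by rw [D.ende2, huy]; simp⟩
        · have hιne2 : ι f ≠ e2 := fun hh => hfe2 (D.ιinj (by rw [hh, D.ιe2]))
          rw [hψ2 f hfe2]
          exact ⟨Or.inl ⟨f, hfS1, rfl⟩, (D.mem_ends_iff hιne2 huv).mpr hfmem⟩
      · rintro ⟨hhU1, hhmem⟩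
        rcases hhU1 with ⟨f, hfS1, rfl⟩ | hhe1
        · by_cases hfe2 : ι f = e2
          · have hfe2' : f = e2' := D.ιinj (by rw [hfe2, D.ιe2])
            have huy : u = y := by
              rw [hfe2, D.ende2] at hhmem
              rcases Sym2.mem_iff.mp hhmem with hh | hh
              · exact absurd hh huv
              · exact hh
            have hunex : u ≠ x := by rw [huy]; exact fun hh => D.hxy hh.symm
            refine ⟨e2', ⟨he2S1, ?_⟩, ?_⟩
            · rw [D.ends2', huy]; exact Sym2.mem_iff.mpr (Or.inr rfl)
            · rw [hψ1, hw, if_neg hunex, ← hfe2]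
          · have hfne2' : f ≠ e2' := fun hh => hfe2 (by rw [hh, D.ιe2])
            exact ⟨f, ⟨hfS1, (D.mem_ends_iff hfe2 huv).mp hhmem⟩, hψ2 f hfne2'⟩
        · have hux : u = x := by
            rw [hhe1, D.ende1] at hhmem
            rcases Sym2.mem_iff.mp hhmem with hh | hh
            · exact absurd hh huv
            · exact hh
          refine ⟨e2', ⟨he2S1, ?_⟩, ?_⟩
          · rw [D.ends2', hux]; exact Sym2.mem_iff.mpr (Or.inl rfl)
          · rw [hψ1, hw, if_pos hux, hhe1]
    have hinj : Set.InjOn ψ (G'.incEdges S1' (π u)) := by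
      intro f1 h1 f2 h2 heq
      by_cases hf1 : f1 = e2' <;> by_cases hf2 : f2 = e2'
      · rw [hf1, hf2]
      · exfalso
        rw [hf1, hψ1, hψ2 f2 hf2] at heq
        rw [hw] at heq
        by_cases hx : u = x
        · rw [if_pos hx] at heq
          exact (hrange f2).2 heq.symm
        · rw [if_neg hx] at heq
          exact hf2 (D.ιinj (by rw [← heq, D.ιe2]))
      · exfalso
        rw [hf2, hψ1, hψ2 f1 hf1] at heq
        rw [hw] at heq
        by_cases hx : u = x
        · rw [if_pos hx] at heq
          exact (hrange f1).2 heq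
        · rw [if_neg hx] at heq
          exact hf1 (D.ιinj (by rw [heq, D.ιe2]))
      · rw [hψ2 f1 hf1, hψ2 f2 hf2] at heq
        exact D.ιinj heq
    show (G.incEdges U1 u).ncard = (G'.incEdges S1' (π u)).ncard
    rw [← himg, Set.ncard_image_of_injOn hinj]
  have hdegU2u : ∀ u : V, u ≠ v →
      G.deg U2 u = G'.deg S2' (π u) + (if u = b then 1 else 0) := by
    intro u huv
    have himg : G.incEdges U2 u =
        ι '' (G'.incEdges S2' (π u)) ∪ (if u = b then {e} else ∅) := by
      ext h
      constructor
      · rintro ⟨hhU2, hhmem⟩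
        rcases hhU2 with ⟨f, hfS2, rfl⟩ | hhe
        · exact Or.inl ⟨f, ⟨hfS2, (D.mem_ends_iff (hS2ne2 f hfS2) huv).mp hhmem⟩, rfl⟩
        · have hub : u = b := by
            rw [hhe, D.ende] at hhmem
            rcases Sym2.mem_iff.mp hhmem with hh | hh
            · exact absurd hh huv
            · exact hh
          rw [if_pos hub]
          exact Or.inr hhe
      · rintro (⟨f, ⟨hfS2, hfmem⟩, rfl⟩ | hh)
        · exact ⟨Or.inl ⟨f, hfS2, rfl⟩,
            (D.mem_ends_iff (hS2ne2 f hfS2) huv).mpr hfmem⟩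
        · by_cases hub : u = b
          · rw [if_pos hub] at hh
            rw [hh]
            exact ⟨heU2, by rw [D.ende, hub]; simp⟩
          · rw [if_neg hub] at hh
            exact absurd hh (Set.notMem_empty h)
    have hdisj2 : Disjoint (ι '' (G'.incEdges S2' (π u)))
        (if u = b then ({e} : Set E) else ∅) := by
      by_cases hub : u = b
      · rw [if_pos hub, Set.disjoint_singleton_right]
        rintro ⟨f, _, hfe⟩
        exact (hrange f).1 hfe
      · rw [if_neg hub]
        exact Set.disjoint_empty _
    have hcard2 : (if u = b then ({e} : Set E) else ∅).ncard =
        (if u = b then 1 else 0) := by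
      by_cases hub : u = b
      · rw [if_pos hub, if_pos hub, Set.ncard_singleton]
      · rw [if_neg hub, if_neg hub, Set.ncard_empty]
    show (G.incEdges U2 u).ncard = (G'.incEdges S2' (π u)).ncard + _
    rw [himg, Set.ncard_union_eq hdisj2 (Set.toFinite _) (Set.toFinite _),
      Set.ncard_image_of_injective _ D.ιinj, hcard2]
  -- balance
  have hbalU : G.Balanced c U1 U2 := by
    intro u
    by_cases huv : u = v
    · rw [huv, hdegU1v, hdegU2v, abs_le]
      constructor <;> push_cast <;> omega
    · by_cases hub : u = b
      · have hwit : ∃ w' : V', w' ≠ π u := by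
          by_cases hxx : π x = π u
          · exact ⟨π y, fun hh => D.hxy (D.πinj x y D.hxv D.hyv (hxx.trans hh.symm))⟩
          · exact ⟨π x, hxx⟩
        obtain ⟨w', hw'⟩ := hwit
        have hd1 : 1 ≤ G'.deg S1' (π u) := G'.one_le_deg hc1' hw'
        have hd2 : 1 ≤ G'.deg S2' (π u) := G'.one_le_deg hc2' hw'
        have hsum : G.deg U1 u + G.deg U2 u ≤ c + 2 := by
          have hdu := G.deg_union hD u
          rw [hU] at hdu
          rw [← hdu, hub]
          exact hdegb
        rw [hdegU1u u huv, hdegU2u u huv, if_pos hub] at hsum ⊢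
        rw [abs_le]
        constructor <;> push_cast <;> omega
      · rw [hdegU1u u huv, hdegU2u u huv, if_neg hub]
        simpa using hBal (π u)
  exact ⟨U1, U2, ⟨hU, hD, ⟨hconnU1, hacyU1⟩, ⟨hconnU2, hacyU2⟩⟩, hbalU⟩

end SurgeryData

end Multigraph

/-- **Theorem (Statement 9).** In a vertex-minimal double tree `G` with no
`c`-balanced double tree decomposition (`c ≥ 2`): if `v` is a 3-vertex which
is a leaf of the tree `T2` of a double tree decomposition `T1 ⊔ T2`, with
unique incident edge `vb ∈ T2`, then `b` is big. -/
theorem three_vertex_leaf_neighbour_big (c : ℕ) (hc : 2 ≤ c) (n m : ℕ)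
    (G : Multigraph (Fin n) (Fin m))
    (hG : G.IsDoubleTree) (hbal : G.NoBalancedDTD c)
    (hmin : ∀ (n' m' : ℕ) (G' : Multigraph (Fin n') (Fin m')),
      G'.IsDoubleTree → G'.NoBalancedDTD c → n ≤ n')
    (v b : Fin n) (hv : G.deg Set.univ v = 3)
    (T1 T2 : Set (Fin m)) (hDTD : G.IsDTD T1 T2)
    (hleaf : G.deg T2 v = 1)
    (e : Fin m) (he : e ∈ T2) (hends : G.ends e = s(v, b)) :
    G.Big c b := by
  classical
  by_contra hbig
  have hsmall : G.deg Set.univ b ≤ c + 2 := Nat.le_of_not_lt hbig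
  obtain ⟨huniv, hdisj, ⟨hc1, ha1⟩, ⟨hc2, ha2⟩⟩ := hDTD
  have hDTD' : G.IsDTD T1 T2 := ⟨huniv, hdisj, ⟨hc1, ha1⟩, ⟨hc2, ha2⟩⟩
  have hvb : b ≠ v := (G.ne_of_ends hends).symm
  have heT2mem : e ∈ G.incEdges T2 v := ⟨he, by rw [hends]; simp⟩
  have hincT2 : G.incEdges T2 v = {e} := by
    obtain ⟨a, ha⟩ := Set.ncard_eq_one.mp hleaf
    rw [ha] at heT2mem ⊢
    rw [Set.mem_singleton_iff.mp heT2mem]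
  have hdegT1v : G.deg T1 v = 2 := by
    have hsplit := G.deg_union hdisj v
    rw [huniv, hv, hleaf] at hsplit
    omega
  obtain ⟨e1, e2, h12, hincT1⟩ := Set.ncard_eq_two.mp hdegT1v
  have he1mem : e1 ∈ G.incEdges T1 v := by rw [hincT1]; exact Or.inl rfl
  have he2mem : e2 ∈ G.incEdges T1 v := by rw [hincT1]; exact Or.inr rfl
  have he1T1 : e1 ∈ T1 := he1mem.1
  have he2T1 : e2 ∈ T1 := he2mem.1
  obtain ⟨x, hende1⟩ : ∃ x, G.ends e1 = s(v, x) := Sym2.mem_iff_exists.mp he1mem.2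
  obtain ⟨y, hende2⟩ : ∃ y, G.ends e2 = s(v, y) := Sym2.mem_iff_exists.mp he2mem.2
  have hxv : x ≠ v := (G.ne_of_ends hende1).symm
  have hyv : y ≠ v := (G.ne_of_ends hende2).symm
  have hee1 : e ≠ e1 := fun hh =>
    Set.disjoint_left.mp hdisj (show e ∈ T1 by rw [hh]; exact he1T1) he
  have hee2 : e ≠ e2 := fun hh =>
    Set.disjoint_left.mp hdisj (show e ∈ T1 by rw [hh]; exact he2T1) he
  have hxy : x ≠ y := by
    intro hh
    refine ha1 e1 he1T1 v x hende1 (G.reach_single ⟨e2, ⟨he2T1, ?_⟩, ?_⟩)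
    · simpa using fun hkk => h12 hkk.symm
    · rw [hende2, hh]
  have hincU : G.incEdges Set.univ v = {e, e1, e2} := by
    ext h
    constructor
    · rintro ⟨-, hh⟩
      have hht : h ∈ T1 ∪ T2 := by rw [huniv]; trivial
      rcases hht with hht | hht
      · have : h ∈ G.incEdges T1 v := ⟨hht, hh⟩
        rw [hincT1] at this
        rcases this with hhh | hhh
        · exact Or.inr (Or.inl hhh)
        · exact Or.inr (Or.inr hhh)
      · have : h ∈ G.incEdges T2 v := ⟨hht, hh⟩
        rw [hincT2] at this
        exact Or.inl this
    · intro hh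
      rcases hh with hh | hh | hh
      · rw [hh]; exact ⟨trivial, by rw [hends]; simp⟩
      · rw [hh]; exact ⟨trivial, by rw [hende1]; simp⟩
      · rw [hh]; exact ⟨trivial, by rw [hende2]; simp⟩
  -- the reduced graph on `Fin (n-1)`
  set n' := Fintype.card {u : Fin n // u ≠ v} with hn'
  set m' := Fintype.card {g : Fin m // g ≠ e ∧ g ≠ e1} with hm'
  set eV : {u : Fin n // u ≠ v} ≃ Fin n' := Fintype.equivFin _ with heV
  set eE : {g : Fin m // g ≠ e ∧ g ≠ e1} ≃ Fin m' := Fintype.equivFin _ with heE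
  set π : Fin n → Fin n' :=
    fun u => eV (if h : u = v then ⟨x, hxv⟩ else ⟨u, h⟩) with hπ
  set ι : Fin m' → Fin m := fun f => (eE.symm f).val with hι
  have hπval : ∀ (u : Fin n) (hu : u ≠ v), π u = eV ⟨u, hu⟩ := fun u hu => by
    rw [hπ]; simp only [dif_neg hu]
  have hπinj : ∀ u w : Fin n, u ≠ v → w ≠ v → π u = π w → u = w := by
    intro u w hu hw hh
    rw [hπval u hu, hπval w hw] at hh
    exact congrArg Subtype.val (eV.injective hh)
  have hπsurj : ∀ u' : Fin n', ∃ u : Fin n, u ≠ v ∧ π u = u' := by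
    intro u'
    refine ⟨(eV.symm u').val, (eV.symm u').prop, ?_⟩
    rw [hπval _ (eV.symm u').prop]
    simp
  have hιinj : Function.Injective ι := fun f g hh =>
    eE.symm.injective (Subtype.ext hh)
  have hιrange : Set.range ι = {g : Fin m | g ≠ e ∧ g ≠ e1} := by
    ext g
    constructor
    · rintro ⟨f, rfl⟩; exact (eE.symm f).prop
    · intro hg; exact ⟨eE ⟨g, hg⟩, by rw [hι]; simp⟩
  have he2ne : e2 ≠ e ∧ e2 ≠ e1 := ⟨fun hh => hee2 hh.symm, fun hh => h12 hh.symm⟩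
  set e2' : Fin m' := eE ⟨e2, he2ne⟩ with he2'def
  have hιe2 : ι e2' = e2 := by rw [hι, he2'def]; simp
  have hnov' : ∀ f : Fin m', ι f ≠ e2 → v ∉ G.ends (ι f) := by
    intro f hfe2 hvmem
    have hmem : ι f ∈ G.incEdges Set.univ v := ⟨trivial, hvmem⟩
    rw [hincU] at hmem
    have hp : ι f ∈ {g : Fin m | g ≠ e ∧ g ≠ e1} := by
      rw [← hιrange]; exact ⟨f, rfl⟩
    simp only [Set.mem_insert_iff, Set.mem_singleton_iff] at hmem
    rcases hmem with hh | hh | hh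
    · exact hp.1 hh
    · exact hp.2 hh
    · exact hfe2 hh
  have hloop : ∀ f : Fin m',
      ¬ (if ι f = e2 then s(π x, π y) else Sym2.map π (G.ends (ι f))).IsDiag := by
    intro f hdiag
    by_cases hfe2 : ι f = e2
    · rw [if_pos hfe2] at hdiag
      exact hxy (hπinj x y hxv hyv (Sym2.mk_isDiag_iff.mp hdiag))
    · rw [if_neg hfe2] at hdiag
      obtain ⟨p, q, hpq⟩ := Multigraph.sym2_rep (G.ends (ι f))
      have hpv : p ≠ v := fun hh => hnov' f hfe2 (by rw [hpq, hh]; simp)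
      have hqv : q ≠ v := fun hh => hnov' f hfe2 (by rw [hpq, hh]; simp)
      rw [hpq, Sym2.map_pair_eq] at hdiag
      exact G.ne_of_ends hpq (hπinj p q hpv hqv (Sym2.mk_isDiag_iff.mp hdiag))
  set G' : Multigraph (Fin n') (Fin m') :=
    ⟨fun f => if ι f = e2 then s(π x, π y) else Sym2.map π (G.ends (ι f)), hloop⟩
    with hG'
  have D : G.SurgeryData G' π ι v b x y e e1 e2 e2' :=
    { πinj := hπinj, πsurj := hπsurj, ιinj := hιinj, ιrange := hιrange,
      ιe2 := hιe2,
      ends' := fun f hf => if_neg hf,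
      ends2' := by
        show (if ι e2' = e2 then s(π x, π y) else _) = s(π x, π y)
        rw [if_pos hιe2],
      ende := hends, ende1 := hende1, ende2 := hende2,
      hbv := hvb, hxv := hxv, hyv := hyv, hxy := hxy, hinc := hincU,
      hee1 := hee1, hee2 := hee2, h12 := h12 }
  have hDTDG' := D.isDTD_pullback T1 T2 hDTD' he he1T1 he2T1
  have hdt : G'.IsDoubleTree := ⟨_, _, hDTDG'⟩
  have hlt : n' < n := by
    have hcard : n' = n - 1 := by
      rw [hn']; simp [Fintype.card_subtype_compl]
    have hpos : 0 < n := v.pos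
    omega
  have hnb : ¬ G'.NoBalancedDTD c := fun hnb =>
    absurd (hmin n' m' G' hdt hnb) (by omega)
  obtain ⟨S1', S2', hS', hBal'⟩ := not_not.mp hnb
  have he2'S : e2' ∈ S1' ∪ S2' := by rw [hS'.1]; trivial
  rcases he2'S with hmem2 | hmem2
  · exact hbal (D.lift c hc S1' S2' hS' hBal' hmem2 hsmall)
  · have hS'' : G'.IsDTD S2' S1' :=
      ⟨by rw [Set.union_comm]; exact hS'.1, hS'.2.1.symm, hS'.2.2.2, hS'.2.2.1⟩
    have hBal'' : G'.Balanced c S2' S1' := fun u => by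
      rw [abs_sub_comm]; exact hBal' u
    exact hbal (D.lift c hc S2' S1' hS'' hBal'' hmem2 hsmall)
end

section
/- Fix an integer c ≥ 2 and let G be a finite double tree with no c-balanced double tree decomposition that has the minimum number of vertices among all such double trees. Let v be a poor 3-vertex of G with big neighbours x, y and small neighbour s, and let G = T1 ⊔ T2 be any double tree decomposition with vs ∈ E(T1). Then: (i) exactly one of the edges vx, vy lies in E(T1); (ii) if vy ∈ E(T2), then swapping vy yields the double tree decomposition G = T1' ⊔ T2' with E(T1') = E(T1) - vx + vy and E(T2') = E(T2) + vx - vy; (iii) the path from x to y in T1 does not contain s. -/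
namespace Multigraph

variable {V E : Type*} {G : Multigraph V E}

lemma adj_symm {S : Set E} : Symmetric (G.Adj S) := by
  rintro a b ⟨e, he, hq⟩
  exact ⟨e, he, by rw [hq, Sym2.eq_swap]⟩

lemma Adj.reach {S : Set E} {a b : V} (h : G.Adj S a b) : G.Reachable S a b :=
  Relation.ReflTransGen.single h

lemma Reachable.symm {S : Set E} {a b : V} (h : G.Reachable S a b) :
    G.Reachable S b a :=
  (@Relation.ReflTransGen.stdSymm _ _ ⟨fun _ _ h => adj_symm h⟩).symm _ _ h

lemma Reachable.trans {S : Set E} {a b d : V} (h : G.Reachable S a b)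
    (h' : G.Reachable S b d) : G.Reachable S a d :=
  Relation.ReflTransGen.trans h h'

lemma reach_refl {S : Set E} {a : V} : G.Reachable S a a := Relation.ReflTransGen.refl

lemma Reachable.mono {S T : Set E} (hST : S ⊆ T) {a b : V} (h : G.Reachable S a b) :
    G.Reachable T a b :=
  Relation.ReflTransGen.mono (r := G.Adj S) (p := G.Adj T)
    (fun _ _ ⟨e, he, hq⟩ => ⟨e, hST he, hq⟩) _ _ h

lemma exists_edge {S : Set E} {a b : V} (h : G.Reachable S a b) (hne : a ≠ b) :
    ∃ e ∈ S, a ∈ G.ends e := by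
  rcases Relation.ReflTransGen.cases_head h with rfl | ⟨c, ⟨e, he, hq⟩, -⟩
  · exact absurd rfl hne
  · exact ⟨e, he, by rw [hq]; exact Sym2.mem_mk_left a c⟩

lemma reach_eq_of_no_edge {S : Set E} {v b : V} (h0 : ∀ e ∈ S, v ∉ G.ends e)
    (h : G.Reachable S v b) : v = b := by
  by_cases hvb : v = b
  · exact hvb
  · obtain ⟨e, he, hm⟩ := exists_edge h hvb
    exact absurd hm (h0 e he)

/-- splitting reachability along a potential bridge -/
lemma reach_split {S : Set E} {e0 : E} {p q : V} (hpq : G.ends e0 = s(p, q)) :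
    ∀ {a b : V}, G.Reachable S a b →
    G.Reachable (S \ {e0}) a b ∨
    (G.Reachable (S \ {e0}) a p ∧ G.Reachable (S \ {e0}) q b) ∨
    (G.Reachable (S \ {e0}) a q ∧ G.Reachable (S \ {e0}) p b) := by
  intro a b h
  induction h using Relation.ReflTransGen.head_induction_on with
  | refl => exact Or.inl reach_refl
  | @head a c hac hcb ih =>
    obtain ⟨e, he, hq⟩ := hac
    by_cases hee : e = e0
    · subst hee
      rw [hpq] at hq
      rcases Sym2.eq_iff.mp hq with ⟨rfl, rfl⟩ | ⟨rfl, rfl⟩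
      · rcases ih with h1 | ⟨h1, h2⟩ | ⟨h1, h2⟩
        · exact Or.inr (Or.inl ⟨reach_refl, h1⟩)
        · exact Or.inl (h1.symm.trans h2)
        · exact Or.inl h2
      · rcases ih with h1 | ⟨h1, h2⟩ | ⟨h1, h2⟩
        · exact Or.inr (Or.inr ⟨reach_refl, h1⟩)
        · exact Or.inl h2
        · exact Or.inl (h1.symm.trans h2)
    · have step : G.Adj (S \ {e0}) a c := ⟨e, ⟨he, hee⟩, hq⟩
      rcases ih with h1 | ⟨h1, h2⟩ | ⟨h1, h2⟩
      · exact Or.inl (step.reach.trans h1)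
      · exact Or.inr (Or.inl ⟨step.reach.trans h1, h2⟩)
      · exact Or.inr (Or.inr ⟨step.reach.trans h1, h2⟩)

/-- shortcut walks past a leaf `v` whose unique incident edge is `e0 = vw`. -/
lemma reach_leaf {S : Set E} {v w : V} {e0 : E} (hvw : v ≠ w)
    (h0 : ∀ e ∈ S, v ∈ G.ends e → e = e0) (hq0 : G.ends e0 = s(v, w)) :
    ∀ {a b : V}, G.Reachable S a b → b ≠ v →
      (a = v → G.Reachable (S \ {e0}) w b) ∧ (a ≠ v → G.Reachable (S \ {e0}) a b) := by
  intro a b h hbv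
  induction h using Relation.ReflTransGen.head_induction_on with
  | refl => exact ⟨fun hav => absurd hav hbv, fun _ => reach_refl⟩
  | @head a c hac hcb ih =>
    obtain ⟨e, he, hq⟩ := hac
    by_cases hcv : c = v
    · have he0 : e = e0 := h0 e he (by rw [hq, hcv]; exact Sym2.mem_mk_right a v)
      have hq2 : s(v, w) = s(a, c) := by rw [← hq0, ← he0, hq]
      rcases Sym2.eq_iff.mp hq2 with ⟨h1, h2⟩ | ⟨h1, h2⟩
      · exact absurd (h2.trans hcv).symm hvw
      · exact ⟨fun hav => absurd (h2.trans hav).symm hvw, fun _ => h2 ▸ ih.1 hcv⟩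
    · have ihc := ih.2 hcv
      by_cases hav : a = v
      · have he0 : e = e0 := h0 e he (by rw [hq, hav]; exact Sym2.mem_mk_left v c)
        have hq2 : s(v, w) = s(a, c) := by rw [← hq0, ← he0, hq]
        rcases Sym2.eq_iff.mp hq2 with ⟨h1, h2⟩ | ⟨h1, h2⟩
        · exact ⟨fun _ => h2 ▸ ihc, fun h => absurd hav h⟩
        · exact absurd h1.symm hcv
      · have hee : e ≠ e0 := by
          intro hee
          have hq2 : s(v, w) = s(a, c) := by rw [← hq0, ← hee, hq]
          rcases Sym2.eq_iff.mp hq2 with ⟨h1, -⟩ | ⟨h1, -⟩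
          · exact hav h1.symm
          · exact hcv h1.symm
        have step : G.Adj (S \ {e0}) a c := ⟨e, ⟨he, hee⟩, hq⟩
        exact ⟨fun h => absurd h hav, fun _ => step.reach.trans ihc⟩

/-- a walk avoiding a vertex `s0` not reachable from its start -/
lemma reach_avoid {S : Set E} {s0 : V} :
    ∀ {a b : V}, G.Reachable S a b → ¬ G.Reachable S a s0 →
      G.Reachable {e ∈ S | s0 ∉ G.ends e} a b := by
  intro a b h
  induction h using Relation.ReflTransGen.head_induction_on with
  | refl => exact fun _ => reach_refl
  | @head a c hac hcb ih =>
    intro hns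
    obtain ⟨e, he, hq⟩ := hac
    have hac' : G.Reachable S a c := Adj.reach ⟨e, he, hq⟩
    have hcs : ¬ G.Reachable S c s0 := fun h => hns (hac'.trans h)
    have hs0 : s0 ∉ G.ends e := by
      rw [hq, Sym2.mem_iff]
      rintro (h1 | h2)
      · exact hns (by rw [h1]; exact reach_refl)
      · exact hns (by rw [h2]; exact hac')
    have hm : e ∈ {e ∈ S | s0 ∉ G.ends e} := ⟨he, hs0⟩
    exact (Adj.reach ⟨e, hm, hq⟩).trans (ih hcs)

/-- edge swap in a spanning tree -/
lemma swap_tree {T : Set E} {e0 g : E} {a b : V}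
    (hT : G.IsSpanningTree T) (he0 : e0 ∈ T) (hg : g ∉ T)
    (hgab : G.ends g = s(a, b)) (hsep : ¬ G.Reachable (T \ {e0}) a b) :
    G.IsSpanningTree ((T \ {e0}) ∪ {g}) := by
  obtain ⟨p, q, hpq⟩ : ∃ p q, G.ends e0 = s(p, q) := by
    induction G.ends e0 using Sym2.ind with | _ p q => exact ⟨p, q, rfl⟩
  have hsub : T \ {e0} ⊆ (T \ {e0}) ∪ {g} := Set.subset_union_left
  have hUpq : G.Reachable ((T \ {e0}) ∪ {g}) p q := by
    rcases reach_split hpq (hT.1 a b) with h1 | ⟨h1, h2⟩ | ⟨h1, h2⟩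
    · exact absurd h1 hsep
    · exact ((h1.symm.mono hsub).trans
        (Adj.reach ⟨g, Or.inr rfl, hgab⟩)).trans (h2.symm.mono hsub)
    · exact ((h2.mono hsub).trans
        (Adj.reach (adj_symm ⟨g, Or.inr rfl, hgab⟩))).trans (h1.mono hsub)
  constructor
  · intro w z
    rcases reach_split hpq (hT.1 w z) with h1 | ⟨h1, h2⟩ | ⟨h1, h2⟩
    · exact h1.mono hsub
    · exact ((h1.mono hsub).trans hUpq).trans (h2.mono hsub)
    · exact ((h1.mono hsub).trans hUpq.symm).trans (h2.mono hsub)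
  · intro e1 he1 r t hrt hreach
    rcases he1 with he1 | he1
    · -- e1 in T minus e0
      have hge1 : g ≠ e1 := fun h => hg (h ▸ he1.1)
      have hgd : ({g} : Set E) \ {e1} = {g} := Set.diff_singleton_eq_self
        (by simp only [Set.mem_singleton_iff]; exact fun h => hge1 h.symm)
      have hset : ((T \ {e0}) ∪ {g}) \ {e1} = ((T \ {e0}) \ {e1}) ∪ {g} := by
        rw [Set.union_diff_distrib, hgd]
      rw [hset] at hreach
      have hsub1 : (((T \ {e0}) \ {e1}) ∪ {g}) \ {g} ⊆ T \ {e0} := by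
        rintro x ⟨hx1 | hx1, hx2⟩
        · exact hx1.1
        · exact absurd hx1 hx2
      have hsub2 : (((T \ {e0}) \ {e1}) ∪ {g}) \ {g} ⊆ T \ {e1} := by
        rintro x ⟨hx1 | hx1, hx2⟩
        · exact ⟨hx1.1.1, hx1.2⟩
        · exact absurd hx1 hx2
      rcases reach_split hgab hreach with h1 | ⟨h1, h2⟩ | ⟨h1, h2⟩
      · exact hT.2 e1 he1.1 r t hrt (h1.mono hsub2)
      · exact hsep (((h1.mono hsub1).symm.trans
          (Adj.reach ⟨e1, he1, hrt⟩)).trans (h2.mono hsub1).symm)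
      · exact hsep (((h2.mono hsub1).trans
          (Adj.reach (adj_symm ⟨e1, he1, hrt⟩))).trans (h1.mono hsub1))
    · -- e1 = g
      have he1' : e1 = g := he1
      have hset : ((T \ {e0}) ∪ {g}) \ {e1} = T \ {e0} := by
        ext x
        simp only [Set.mem_diff, Set.mem_union, Set.mem_singleton_iff, he1']
        constructor
        · rintro ⟨h1 | h1, h2⟩
          · exact h1
          · exact absurd h1 h2
        · intro h1
          exact ⟨Or.inl h1, fun hh => hg (hh ▸ h1.1)⟩
      rw [hset] at hreach
      have : s(a, b) = s(r, t) := by rw [← hgab, ← he1', hrt]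
      rcases Sym2.eq_iff.mp this with ⟨h1, h2⟩ | ⟨h1, h2⟩
      · exact hsep (h1 ▸ h2 ▸ hreach)
      · exact hsep (h1 ▸ h2 ▸ hreach.symm)


section Transfer

variable {W F : Type*} (σ : V ≃ W) (τ : E ≃ F)

lemma sym2_map_map (z : Sym2 V) : Sym2.map σ.symm (Sym2.map σ z) = z := by
  rw [Sym2.map_map]
  simp

def mapMG (G : Multigraph V E) : Multigraph W F where
  ends := fun f => Sym2.map σ (G.ends (τ.symm f))
  loopless := fun f h => by
    apply G.loopless (τ.symm f)
    obtain ⟨p, q, hz⟩ : ∃ p q, G.ends (τ.symm f) = s(p, q) := by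
      induction G.ends (τ.symm f) using Sym2.ind with
      | _ p q => exact ⟨p, q, rfl⟩
    have h' : (Sym2.map σ (G.ends (τ.symm f))).IsDiag := h
    rw [hz, Sym2.map_pair_eq, Sym2.mk_isDiag_iff] at h'
    rw [hz, Sym2.mk_isDiag_iff]
    exact σ.injective h'

lemma mapMG_ends (G : Multigraph V E) (e : E) :
    (mapMG σ τ G).ends (τ e) = Sym2.map σ (G.ends e) := by
  simp [mapMG]

lemma mapMG_mapMG (G : Multigraph V E) : mapMG σ.symm τ.symm (mapMG σ τ G) = G := by
  cases G with
  | mk ends lp =>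
    simp only [mapMG]
    congr 1
    funext e
    simp only [Equiv.symm_symm, Equiv.apply_symm_apply, Equiv.symm_apply_apply]
    exact sym2_map_map σ (ends e)

variable {σ τ}

lemma adj_map {G : Multigraph V E} {S : Set E} {a b : V} (h : G.Adj S a b) :
    (mapMG σ τ G).Adj (τ '' S) (σ a) (σ b) := by
  obtain ⟨e, he, hq⟩ := h
  exact ⟨τ e, Set.mem_image_of_mem τ he, by rw [mapMG_ends, hq, Sym2.map_pair_eq]⟩

lemma adj_map_back {G : Multigraph V E} {S : Set E} {w z : W}
    (h : (mapMG σ τ G).Adj (τ '' S) w z) : G.Adj S (σ.symm w) (σ.symm z) := by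
  obtain ⟨f, hf, hq⟩ := h
  obtain ⟨e, he, rfl⟩ := hf
  refine ⟨e, he, ?_⟩
  have := congrArg (Sym2.map σ.symm) hq
  rw [mapMG_ends] at this
  rw [sym2_map_map] at this
  rw [this, Sym2.map_pair_eq]

lemma reach_map {G : Multigraph V E} {S : Set E} {a b : V} (h : G.Reachable S a b) :
    (mapMG σ τ G).Reachable (τ '' S) (σ a) (σ b) :=
  Relation.ReflTransGen.lift σ (fun _ _ h => adj_map h) _ _ h

lemma reach_map_back {G : Multigraph V E} {S : Set E} {w z : W}
    (h : (mapMG σ τ G).Reachable (τ '' S) w z) :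
    G.Reachable S (σ.symm w) (σ.symm z) :=
  Relation.ReflTransGen.lift σ.symm (fun _ _ h => adj_map_back h) _ _ h

lemma connected_map {G : Multigraph V E} {S : Set E} (h : G.Connected S) :
    (mapMG σ τ G).Connected (τ '' S) := by
  intro a' b'
  have := reach_map (σ := σ) (τ := τ) (h (σ.symm a') (σ.symm b'))
  simpa using this

lemma acyclic_map {G : Multigraph V E} {S : Set E} (h : G.Acyclic S) :
    (mapMG σ τ G).Acyclic (τ '' S) := by
  intro f hf a' b' hq hreach
  obtain ⟨e, he, rfl⟩ := hf
  have hends : G.ends e = s(σ.symm a', σ.symm b') := by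
    have := congrArg (Sym2.map σ.symm) hq
    rw [mapMG_ends, sym2_map_map, Sym2.map_pair_eq] at this
    exact this
  have hset : (τ '' S) \ {τ e} = τ '' (S \ {e}) := by
    rw [Set.image_diff τ.injective, Set.image_singleton]
  rw [hset] at hreach
  exact h e he _ _ hends (reach_map_back hreach)

lemma incEdges_map {G : Multigraph V E} {S : Set E} {w : V} :
    (mapMG σ τ G).incEdges (τ '' S) (σ w) = τ '' (G.incEdges S w) := by
  ext f
  obtain ⟨e, rfl⟩ := τ.surjective f
  have h1 : τ e ∈ τ '' S ↔ e ∈ S := τ.injective.mem_set_image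
  have h3 : τ e ∈ τ '' (G.incEdges S w) ↔ e ∈ G.incEdges S w := τ.injective.mem_set_image
  have h2 : σ w ∈ (mapMG σ τ G).ends (τ e) ↔ w ∈ G.ends e := by
    rw [mapMG_ends, Sym2.mem_map]
    constructor
    · rintro ⟨a, ha, haw⟩
      rwa [σ.injective haw] at ha
    · exact fun h => ⟨w, h, rfl⟩
  show (τ e ∈ τ '' S ∧ _) ↔ _
  rw [h1, h2, h3]
  rfl

lemma deg_map {G : Multigraph V E} {S : Set E} {w : V} :
    (mapMG σ τ G).deg (τ '' S) (σ w) = G.deg S w := by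
  unfold deg
  rw [incEdges_map, Set.ncard_image_of_injective _ τ.injective]

lemma balanced_map {G : Multigraph V E} {c : ℕ} {S1 S2 : Set E}
    (h : G.Balanced c S1 S2) : (mapMG σ τ G).Balanced c (τ '' S1) (τ '' S2) := by
  intro w'
  obtain ⟨w, rfl⟩ := σ.surjective w'
  rw [deg_map, deg_map]
  exact h w

lemma dtd_map {G : Multigraph V E} {S1 S2 : Set E} (h : G.IsDTD S1 S2) :
    (mapMG σ τ G).IsDTD (τ '' S1) (τ '' S2) := by
  obtain ⟨hu, hd, h1, h2⟩ := h
  refine ⟨?_, (Set.disjoint_image_iff τ.injective).mpr hd,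
    ⟨connected_map h1.1, acyclic_map h1.2⟩, ⟨connected_map h2.1, acyclic_map h2.2⟩⟩
  rw [← Set.image_union, hu, Set.image_univ]
  exact τ.range_eq_univ

lemma nobal_map {G : Multigraph V E} {c : ℕ} (h : NoBalancedDTD c G) :
    NoBalancedDTD c (mapMG σ τ G) := by
  rintro ⟨T1, T2, hd, hb⟩
  apply h
  refine ⟨τ.symm '' T1, τ.symm '' T2, ?_, ?_⟩
  · have := dtd_map (σ := σ.symm) (τ := τ.symm) hd
    rwa [mapMG_mapMG] at this
  · have := balanced_map (σ := σ.symm) (τ := τ.symm) hb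
    rwa [mapMG_mapMG] at this

lemma doubletree_map {G : Multigraph V E} (h : G.IsDoubleTree) :
    (mapMG σ τ G).IsDoubleTree := by
  obtain ⟨T1, T2, hd⟩ := h
  exact ⟨τ '' T1, τ '' T2, dtd_map hd⟩

end Transfer


section Suppress

variable {n m : ℕ}

/-- vertex set after deleting `v` -/
abbrev VDel (n : ℕ) (v : Fin n) := {w : Fin n // w ≠ v}

/-- edge set after deleting `ey, es` (the index `ex` is reused for the new edge `xy`) -/
abbrev EDel (m : ℕ) (ey es : Fin m) := {e : Fin m // e ≠ ey ∧ e ≠ es}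

def jmap (v x : Fin n) (hxv : x ≠ v) : Fin n → VDel n v :=
  fun w => if h : w = v then ⟨x, hxv⟩ else ⟨w, h⟩

lemma jmap_ne {v x : Fin n} (hxv : x ≠ v) {w : Fin n} (hw : w ≠ v) :
    jmap v x hxv w = ⟨w, hw⟩ := dif_neg hw

lemma jmap_v {v x : Fin n} (hxv : x ≠ v) : jmap v x hxv v = ⟨x, hxv⟩ := dif_pos rfl

lemma jmap_pair {v x : Fin n} (hxv : x ≠ v) {p q : Fin n} (hp : p ≠ v) (hq : q ≠ v) :
    Sym2.map (jmap v x hxv) s(p, q) = s((⟨p, hp⟩ : VDel n v), ⟨q, hq⟩) := by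
  rw [Sym2.map_pair_eq, jmap_ne hxv hp, jmap_ne hxv hq]

section GDel

variable (G : Multigraph (Fin n) (Fin m)) (v x y : Fin n) (ex ey es : Fin m)

/-- for an edge surviving the suppression and different from `ex`,
`v` is not among its ends -/
lemma edel_not_v (hcls : ∀ e, v ∈ G.ends e → e = ex ∨ e = ey ∨ e = es)
    (e : EDel m ey es) (hne : e.val ≠ ex) (hv : v ∈ G.ends e.val) : False := by
  rcases hcls e.val hv with h | h | h
  · exact hne h
  · exact e.2.1 h
  · exact e.2.2 h

/-- the suppressed graph -/
def GDel (hxv : x ≠ v) (hyv : y ≠ v) (hxy : x ≠ y)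
    (hcls : ∀ e, v ∈ G.ends e → e = ex ∨ e = ey ∨ e = es) :
    Multigraph (VDel n v) (EDel m ey es) where
  ends e := if e.val = ex then s(⟨x, hxv⟩, ⟨y, hyv⟩)
    else Sym2.map (jmap v x hxv) (G.ends e.val)
  loopless e h := by
    split_ifs at h with hc
    · rw [Sym2.mk_isDiag_iff] at h
      exact hxy (congrArg Subtype.val h)
    · obtain ⟨p, q, hz⟩ : ∃ p q, G.ends e.val = s(p, q) := by
        induction G.ends e.val using Sym2.ind with
        | _ p q => exact ⟨p, q, rfl⟩
      have hp : p ≠ v := fun hh => edel_not_v G v ex ey es hcls e hc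
        (by rw [hz, ← hh]; exact Sym2.mem_mk_left p q)
      have hq : q ≠ v := fun hh => edel_not_v G v ex ey es hcls e hc
        (by rw [hz, ← hh]; exact Sym2.mem_mk_right p q)
      rw [hz, jmap_pair hxv hp hq, Sym2.mk_isDiag_iff] at h
      apply G.loopless e.val
      rw [hz, Sym2.mk_isDiag_iff]
      exact congrArg Subtype.val h

variable (hxv : x ≠ v) (hyv : y ≠ v) (hxy : x ≠ y)
  (hcls : ∀ e, v ∈ G.ends e → e = ex ∨ e = ey ∨ e = es)
  (hexey : ex ≠ ey) (hexes : ex ≠ es)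

lemma GDel_ends_ex :
    (GDel G v x y ex ey es hxv hyv hxy hcls).ends ⟨ex, ⟨hexey, hexes⟩⟩
      = s(⟨x, hxv⟩, ⟨y, hyv⟩) := if_pos rfl

lemma GDel_ends_ne (e : EDel m ey es) (h : e.val ≠ ex) :
    (GDel G v x y ex ey es hxv hyv hxy hcls).ends e
      = Sym2.map (jmap v x hxv) (G.ends e.val) := if_neg h

/-- computing ends of surviving old edges -/
lemma GDel_ends_pair (e : EDel m ey es) (h : e.val ≠ ex) {p q : Fin n}
    (hpq : G.ends e.val = s(p, q)) (hp : p ≠ v) (hq : q ≠ v) :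
    (GDel G v x y ex ey es hxv hyv hxy hcls).ends e = s(⟨p, hp⟩, ⟨q, hq⟩) := by
  rw [GDel_ends_ne G v x y ex ey es hxv hyv hxy hcls e h, hpq, jmap_pair]

/-- lowering an ends-equation from `GDel` to `G` -/
lemma GDel_ends_lower (e : EDel m ey es) (h : e.val ≠ ex) {a b : VDel n v}
    (hq : (GDel G v x y ex ey es hxv hyv hxy hcls).ends e = s(a, b)) :
    G.ends e.val = s(a.val, b.val) := by
  obtain ⟨p, q, hz⟩ : ∃ p q, G.ends e.val = s(p, q) := by
    induction G.ends e.val using Sym2.ind with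
    | _ p q => exact ⟨p, q, rfl⟩
  have hp : p ≠ v := fun hh => edel_not_v G v ex ey es hcls e h
    (by rw [hz, ← hh]; exact Sym2.mem_mk_left p q)
  have hq' : q ≠ v := fun hh => edel_not_v G v ex ey es hcls e h
    (by rw [hz, ← hh]; exact Sym2.mem_mk_right p q)
  rw [GDel_ends_pair G v x y ex ey es hxv hyv hxy hcls e h hz hp hq'] at hq
  rcases Sym2.eq_iff.mp hq with ⟨h1, h2⟩ | ⟨h1, h2⟩
  · rw [hz, ← congrArg Subtype.val h1, ← congrArg Subtype.val h2]
  · rw [hz, ← congrArg Subtype.val h1, ← congrArg Subtype.val h2, Sym2.eq_swap]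

/-- membership of a vertex ≠ v in ends of a surviving old edge -/
lemma GDel_mem_ends (e : EDel m ey es) (h : e.val ≠ ex) {w : Fin n} (hw : w ≠ v) :
    (⟨w, hw⟩ : VDel n v) ∈ (GDel G v x y ex ey es hxv hyv hxy hcls).ends e
      ↔ w ∈ G.ends e.val := by
  obtain ⟨p, q, hz⟩ : ∃ p q, G.ends e.val = s(p, q) := by
    induction G.ends e.val using Sym2.ind with
    | _ p q => exact ⟨p, q, rfl⟩
  have hp : p ≠ v := fun hh => edel_not_v G v ex ey es hcls e h
    (by rw [hz, ← hh]; exact Sym2.mem_mk_left p q)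
  have hq' : q ≠ v := fun hh => edel_not_v G v ex ey es hcls e h
    (by rw [hz, ← hh]; exact Sym2.mem_mk_right p q)
  rw [GDel_ends_pair G v x y ex ey es hxv hyv hxy hcls e h hz hp hq', hz,
    Sym2.mem_iff, Sym2.mem_iff]
  constructor
  · rintro (h1 | h1)
    · exact Or.inl (congrArg Subtype.val h1)
    · exact Or.inr (congrArg Subtype.val h1)
  · rintro (h1 | h1)
    · exact Or.inl (Subtype.ext h1)
    · exact Or.inr (Subtype.ext h1)

/-- raising a `v`-free walk from `G` to `GDel` -/
lemma GDel_reach_up0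
    (hENDx : v ∈ G.ends ex) (hENDy : v ∈ G.ends ey) (hENDs : v ∈ G.ends es)
    (S : Set (Fin m)) (S' : Set (EDel m ey es))
    (hSv : ∀ e ∈ S, v ∉ G.ends e)
    (hSS' : ∀ e, e ∈ S → ∀ hE : e ≠ ey ∧ e ≠ es, (⟨e, hE⟩ : EDel m ey es) ∈ S')
    {a b : Fin n} (h : G.Reachable S a b) :
    (GDel G v x y ex ey es hxv hyv hxy hcls).Reachable S'
      (jmap v x hxv a) (jmap v x hxv b) := by
  induction h using Relation.ReflTransGen.head_induction_on with
  | refl => exact reach_refl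
  | @head a c hac hcb ih =>
    obtain ⟨e, he, hq⟩ := hac
    have hv' : v ∉ G.ends e := hSv e he
    have ha : a ≠ v := fun hh => hv' (by rw [hq, ← hh]; exact Sym2.mem_mk_left a c)
    have hc : c ≠ v := fun hh => hv' (by rw [hq, ← hh]; exact Sym2.mem_mk_right a c)
    have hEx : e ≠ ex := fun hh => hv' (hh ▸ hENDx)
    have hEy : e ≠ ey := fun hh => hv' (hh ▸ hENDy)
    have hEs : e ≠ es := fun hh => hv' (hh ▸ hENDs)
    have step : (GDel G v x y ex ey es hxv hyv hxy hcls).Adj S'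
        (jmap v x hxv a) (jmap v x hxv c) := by
      refine ⟨⟨e, hEy, hEs⟩, hSS' e he ⟨hEy, hEs⟩, ?_⟩
      rw [jmap_ne hxv ha, jmap_ne hxv hc]
      exact GDel_ends_pair G v x y ex ey es hxv hyv hxy hcls ⟨e, hEy, hEs⟩ hEx hq ha hc
    exact step.reach.trans ih

/-- raising a walk from `G` to `GDel`, contracting passages through `v` -/
lemma GDel_reach_up2
    (hENDx : G.ends ex = s(v, x)) (hENDy : G.ends ey = s(v, y)) (hENDs : v ∈ G.ends es)
    (S : Set (Fin m)) (S' : Set (EDel m ey es))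
    (hSv : ∀ e ∈ S, v ∈ G.ends e → e = ex ∨ e = ey)
    (hfS' : (⟨ex, hexey, hexes⟩ : EDel m ey es) ∈ S')
    (hSS' : ∀ e, e ∈ S → v ∉ G.ends e → ∀ hE : e ≠ ey ∧ e ≠ es, (⟨e, hE⟩ : EDel m ey es) ∈ S')
    {a b : Fin n} (h : G.Reachable S a b) :
    (GDel G v x y ex ey es hxv hyv hxy hcls).Reachable S'
      (jmap v x hxv a) (jmap v x hxv b) := by
  have hstepf : (GDel G v x y ex ey es hxv hyv hxy hcls).Adj S'
      ⟨x, hxv⟩ ⟨y, hyv⟩ :=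
    ⟨⟨ex, hexey, hexes⟩, hfS', GDel_ends_ex G v x y ex ey es hxv hyv hxy hcls hexey hexes⟩
  induction h using Relation.ReflTransGen.head_induction_on with
  | refl => exact reach_refl
  | @head a c hac hcb ih =>
    obtain ⟨e, he, hq⟩ := hac
    by_cases hv' : v ∈ G.ends e
    · rcases hSv e he hv' with rfl | rfl
      · -- e = ex
        rw [hENDx] at hq
        rcases Sym2.eq_iff.mp hq with ⟨h1, h2⟩ | ⟨h1, h2⟩
        · have : jmap v x hxv a = jmap v x hxv c := by
            rw [← h1, ← h2, jmap_v, jmap_ne hxv hxv]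
          rw [this]; exact ih
        · have : jmap v x hxv a = jmap v x hxv c := by
            rw [← h1, ← h2, jmap_v, jmap_ne hxv hxv]
          rw [this]; exact ih
      · -- e = ey
        rw [hENDy] at hq
        rcases Sym2.eq_iff.mp hq with ⟨h1, h2⟩ | ⟨h1, h2⟩
        · rw [← h1, jmap_v]
          rw [← h2, jmap_ne hxv hyv] at ih
          exact hstepf.reach.trans ih
        · rw [← h2, jmap_ne hxv hyv]
          rw [← h1, jmap_v] at ih
          exact (Adj.reach (adj_symm hstepf)).trans ih
    · have ha : a ≠ v := fun hh => hv' (by rw [hq, ← hh]; exact Sym2.mem_mk_left a c)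
      have hc : c ≠ v := fun hh => hv' (by rw [hq, ← hh]; exact Sym2.mem_mk_right a c)
      have hEx : e ≠ ex := fun hh => hv' (by rw [hh, hENDx]; exact Sym2.mem_mk_left v x)
      have hEy : e ≠ ey := fun hh => hv' (by rw [hh, hENDy]; exact Sym2.mem_mk_left v y)
      have hEs : e ≠ es := fun hh => hv' (hh ▸ hENDs)
      have step : (GDel G v x y ex ey es hxv hyv hxy hcls).Adj S'
          (jmap v x hxv a) (jmap v x hxv c) := by
        refine ⟨⟨e, hEy, hEs⟩, hSS' e he hv' ⟨hEy, hEs⟩, ?_⟩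
        rw [jmap_ne hxv ha, jmap_ne hxv hc]
        exact GDel_ends_pair G v x y ex ey es hxv hyv hxy hcls ⟨e, hEy, hEs⟩ hEx hq ha hc
      exact step.reach.trans ih

/-- lowering a walk from `GDel` to `G`, expanding the new edge into `x–v–y` -/
lemma GDel_reach_down
    (hENDx : G.ends ex = s(v, x)) (hENDy : G.ends ey = s(v, y))
    (S' : Set (EDel m ey es)) (S : Set (Fin m))
    (h1 : ∀ e' ∈ S', e'.val ≠ ex → e'.val ∈ S)
    (h2 : (⟨ex, hexey, hexes⟩ : EDel m ey es) ∈ S' → ex ∈ S ∧ ey ∈ S)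
    {a' b' : VDel n v}
    (h : (GDel G v x y ex ey es hxv hyv hxy hcls).Reachable S' a' b') :
    G.Reachable S a'.val b'.val := by
  induction h using Relation.ReflTransGen.head_induction_on with
  | refl => exact reach_refl
  | @head a' c' hac hcb ih =>
    obtain ⟨e', he', hq⟩ := hac
    by_cases hvx' : e'.val = ex
    · have hf : e' = ⟨ex, hexey, hexes⟩ := Subtype.ext hvx'
      subst hf
      rw [GDel_ends_ex G v x y ex ey es hxv hyv hxy hcls hexey hexes] at hq
      have hxyS := h2 he'
      rcases Sym2.eq_iff.mp hq with ⟨ha1, hc1⟩ | ⟨ha1, hc1⟩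
      · have hav : a'.val = x := (congrArg Subtype.val ha1).symm
        have hcv : c'.val = y := (congrArg Subtype.val hc1).symm
        rw [hav]
        rw [hcv] at ih
        have st1 : G.Adj S x v := ⟨ex, hxyS.1, by rw [hENDx, Sym2.eq_swap]⟩
        have st2 : G.Adj S v y := ⟨ey, hxyS.2, hENDy⟩
        exact (st1.reach.trans st2.reach).trans ih
      · have hav : a'.val = y := (congrArg Subtype.val hc1).symm
        have hcv : c'.val = x := (congrArg Subtype.val ha1).symm
        rw [hav]
        rw [hcv] at ih
        have st1 : G.Adj S y v := ⟨ey, hxyS.2, by rw [hENDy, Sym2.eq_swap]⟩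
        have st2 : G.Adj S v x := ⟨ex, hxyS.1, hENDx⟩
        exact (st1.reach.trans st2.reach).trans ih
    · have hql := GDel_ends_lower G v x y ex ey es hxv hyv hxy hcls e' hvx' hq
      exact (Adj.reach ⟨e'.val, h1 e' he' hvx', hql⟩).trans ih

/-- the suppressed graph inherits a double tree decomposition -/
lemma GDel_dtd
    (hxv : x ≠ v) (hyv : y ≠ v) (hxy : x ≠ y)
    (hcls : ∀ e, v ∈ G.ends e → e = ex ∨ e = ey ∨ e = es)
    (hexey : ex ≠ ey) (hexes : ex ≠ es)
    (s : Fin n) (hsv : s ≠ v)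
    (hex : G.ends ex = s(v, x)) (hey : G.ends ey = s(v, y)) (hes : G.ends es = s(v, s))
    (A B : Set (Fin m)) (hun : A ∪ B = Set.univ) (hdis : Disjoint A B)
    (hTA : G.IsSpanningTree A) (hTB : G.IsSpanningTree B)
    (hesA : es ∈ A) (hexB : ex ∈ B) (heyB : ey ∈ B) :
    (GDel G v x y ex ey es hxv hyv hxy hcls).IsDTD
      {e : EDel m ey es | e.val ∈ A} {e : EDel m ey es | e.val ∈ B} := by
  have hvex : v ∈ G.ends ex := by rw [hex]; exact Sym2.mem_mk_left v x
  have hvey : v ∈ G.ends ey := by rw [hey]; exact Sym2.mem_mk_left v y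
  have hves : v ∈ G.ends es := by rw [hes]; exact Sym2.mem_mk_left v s
  have hAv : ∀ e ∈ A, v ∈ G.ends e → e = es := by
    intro e he hv'
    rcases hcls e hv' with rfl | rfl | rfl
    · exact (Set.disjoint_left.mp hdis he hexB).elim
    · exact (Set.disjoint_left.mp hdis he heyB).elim
    · rfl
  have hBv : ∀ e ∈ B, v ∈ G.ends e → e = ex ∨ e = ey := by
    intro e he hv'
    rcases hcls e hv' with rfl | rfl | rfl
    · exact Or.inl rfl
    · exact Or.inr rfl
    · exact (Set.disjoint_left.mp hdis hesA he).elim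
  refine ⟨?_, ?_, ⟨?_, ?_⟩, ⟨?_, ?_⟩⟩
  · -- union
    apply Set.eq_univ_iff_forall.mpr
    intro e'
    have : e'.val ∈ A ∪ B := Set.eq_univ_iff_forall.mp hun e'.val
    rcases this with h | h
    · exact Or.inl h
    · exact Or.inr h
  · -- disjoint
    exact Set.disjoint_left.mpr (fun {e'} hA hB => Set.disjoint_left.mp hdis hA hB)
  · -- A' connected
    rintro ⟨a, ha⟩ ⟨b, hb⟩
    have h2 := (reach_leaf (Ne.symm hsv) hAv hes (hTA.1 a b) hb).2 ha
    have h3 := GDel_reach_up0 G v x y ex ey es hxv hyv hxy hcls hvex hvey hves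
      (A \ {es}) {e : EDel m ey es | e.val ∈ A}
      (fun e he hv' => he.2 (hAv e he.1 hv'))
      (fun e he _ => he.1) h2
    rwa [jmap_ne hxv ha, jmap_ne hxv hb] at h3
  · -- A' acyclic
    rintro e' he' a' b' hq' hre
    have hvalx : e'.val ≠ ex := fun h => Set.disjoint_left.mp hdis (h ▸ he') hexB
    have hql := GDel_ends_lower G v x y ex ey es hxv hyv hxy hcls e' hvalx hq'
    have hd := GDel_reach_down G v x y ex ey es hxv hyv hxy hcls hexey hexes hex hey
      ({e : EDel m ey es | e.val ∈ A} \ {e'}) (A \ {e'.val})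
      (fun e'' he'' _ => ⟨he''.1, fun hh => he''.2 (Subtype.ext hh)⟩)
      (fun hf => (Set.disjoint_left.mp hdis hf.1 hexB).elim)
      hre
    exact hTA.2 e'.val he' a'.val b'.val hql hd
  · -- B' connected
    rintro ⟨a, ha⟩ ⟨b, hb⟩
    have h3 := GDel_reach_up2 G v x y ex ey es hxv hyv hxy hcls hexey hexes hex hey hves
      B {e : EDel m ey es | e.val ∈ B} hBv hexB
      (fun e he _ _ => he) (hTB.1 a b)
    rwa [jmap_ne hxv ha, jmap_ne hxv hb] at h3
  · -- B' acyclic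
    rintro e' he' a' b' hq' hre
    by_cases hvx' : e'.val = ex
    · have hf : e' = ⟨ex, hexey, hexes⟩ := Subtype.ext hvx'
      subst hf
      rw [GDel_ends_ex G v x y ex ey es hxv hyv hxy hcls hexey hexes] at hq'
      have hd := GDel_reach_down G v x y ex ey es hxv hyv hxy hcls hexey hexes hex hey
        ({e : EDel m ey es | e.val ∈ B} \ {⟨ex, hexey, hexes⟩}) (B \ {ey})
        (fun e'' he'' _ => ⟨he''.1, e''.2.1⟩)
        (fun hf => (hf.2 rfl).elim)
        hre
      have hexBey : ex ∈ B \ {ey} := ⟨hexB, hexey⟩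
      rcases Sym2.eq_iff.mp hq' with ⟨ha1, hb1⟩ | ⟨ha1, hb1⟩
      · have hd2 : G.Reachable (B \ {ey}) x y := by
          have hax : a'.val = x := (congrArg Subtype.val ha1).symm
          have hby : b'.val = y := (congrArg Subtype.val hb1).symm
          rwa [hax, hby] at hd
        exact hTB.2 ey heyB v y hey ((Adj.reach ⟨ex, hexBey, hex⟩).trans hd2)
      · have hd2 : G.Reachable (B \ {ey}) x y := by
          have hax : a'.val = y := (congrArg Subtype.val hb1).symm
          have hby : b'.val = x := (congrArg Subtype.val ha1).symm
          rw [hax, hby] at hd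
          exact hd.symm
        exact hTB.2 ey heyB v y hey ((Adj.reach ⟨ex, hexBey, hex⟩).trans hd2)
    · have hql := GDel_ends_lower G v x y ex ey es hxv hyv hxy hcls e' hvx' hq'
      have hd := GDel_reach_down G v x y ex ey es hxv hyv hxy hcls hexey hexes hex hey
        ({e : EDel m ey es | e.val ∈ B} \ {e'}) (B \ {e'.val})
        (fun e'' he'' _ => ⟨he''.1, fun hh => he''.2 (Subtype.ext hh)⟩)
        (fun hf => ⟨⟨hexB, fun hh => hvx' hh.symm⟩, ⟨heyB, fun hh => e'.2.1 hh.symm⟩⟩)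
        hre
      exact hTB.2 e'.val he' a'.val b'.val hql hd

/-- transfer of incidence sets between `G` and the suppressed graph -/
lemma GDel_incEdges_val
    (hxv : x ≠ v) (hyv : y ≠ v) (hxy : x ≠ y)
    (hcls : ∀ e, v ∈ G.ends e → e = ex ∨ e = ey ∨ e = es)
    (hexey : ex ≠ ey) (hexes : ex ≠ es)
    (S' : Set (EDel m ey es)) (e0 : Fin m)
    (w : Fin n) (hw : w ≠ v) (hwe0 : w ∉ G.ends e0)
    (hcompat : (⟨ex, hexey, hexes⟩ : EDel m ey es) ∈ S' →
      ((⟨w, hw⟩ : VDel n v) ∈ (GDel G v x y ex ey es hxv hyv hxy hcls).ends (⟨ex, hexey, hexes⟩ : EDel m ey es) ↔ w ∈ G.ends ex)) :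
    G.incEdges (Subtype.val '' S' ∪ {e0}) w
      = Subtype.val '' ((GDel G v x y ex ey es hxv hyv hxy hcls).incEdges S' ⟨w, hw⟩) := by
  ext e
  constructor
  · rintro ⟨he, hwe⟩
    rcases he with ⟨e1, he1, rfl⟩ | hev
    · by_cases h1 : e1.val = ex
      · have hfe : e1 = (⟨ex, hexey, hexes⟩ : EDel m ey es) := Subtype.ext h1
        refine ⟨e1, ⟨he1, ?_⟩, rfl⟩
        rw [hfe]
        refine (hcompat (by rw [← hfe]; exact he1)).mpr ?_
        rw [← h1]
        exact hwe
      · exact ⟨e1, ⟨he1, (GDel_mem_ends G v x y ex ey es hxv hyv hxy hcls e1 h1 hw).mpr hwe⟩, rfl⟩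
    · rw [hev] at hwe
      exact (hwe0 hwe).elim
  · rintro ⟨e1, ⟨he1, hw'⟩, rfl⟩
    refine ⟨Or.inl ⟨e1, he1, rfl⟩, ?_⟩
    by_cases h1 : e1.val = ex
    · have hfe : e1 = (⟨ex, hexey, hexes⟩ : EDel m ey es) := Subtype.ext h1
      rw [h1]
      refine (hcompat (by rw [← hfe]; exact he1)).mp ?_
      rw [← hfe]
      exact hw'
    · exact (GDel_mem_ends G v x y ex ey es hxv hyv hxy hcls e1 h1 hw).mp hw'

/-- lifting a balanced double tree decomposition from the suppressed graph to `G` -/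
lemma GDel_lift (c : ℕ) (hc : 2 ≤ c)
    (hxv : x ≠ v) (hyv : y ≠ v) (hxy : x ≠ y)
    (hcls : ∀ e, v ∈ G.ends e → e = ex ∨ e = ey ∨ e = es)
    (hexey : ex ≠ ey) (hexes : ex ≠ es) (heyes : ey ≠ es)
    (s : Fin n) (hsv : s ≠ v) (hxs : x ≠ s) (hys : y ≠ s)
    (hex : G.ends ex = s(v, x)) (hey : G.ends ey = s(v, y)) (hes : G.ends es = s(v, s))
    (hsmall : G.deg Set.univ s ≤ c + 2)
    (S1 S2 : Set (EDel m ey es))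
    (hdtd2 : (GDel G v x y ex ey es hxv hyv hxy hcls).IsDTD S1 S2)
    (hbal2 : (GDel G v x y ex ey es hxv hyv hxy hcls).Balanced c S1 S2)
    (hfS1 : (⟨ex, hexey, hexes⟩ : EDel m ey es) ∈ S1) :
    ∃ U1 U2, G.IsDTD U1 U2 ∧ G.Balanced c U1 U2 := by
  obtain ⟨hun2, hdis2, hT1, hT2⟩ := hdtd2
  have hvex : v ∈ G.ends ex := by rw [hex]; exact Sym2.mem_mk_left v x
  have hvey : v ∈ G.ends ey := by rw [hey]; exact Sym2.mem_mk_left v y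
  have hves : v ∈ G.ends es := by rw [hes]; exact Sym2.mem_mk_left v s
  set U1 : Set (Fin m) := (Subtype.val '' S1) ∪ {ey} with hU1def
  set U2 : Set (Fin m) := (Subtype.val '' S2) ∪ {es} with hU2def
  have hexU1 : ex ∈ U1 := Or.inl ⟨(⟨ex, hexey, hexes⟩ : EDel m ey es), hfS1, rfl⟩
  have heyU1 : ey ∈ U1 := Or.inr rfl
  have hesU2 : es ∈ U2 := Or.inr rfl
  have hfS2 : (⟨ex, hexey, hexes⟩ : EDel m ey es) ∉ S2 := fun h => Set.disjoint_left.mp hdis2 hfS1 h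
  have hval_ey : ∀ S' : Set (EDel m ey es), ey ∉ Subtype.val '' S' := by
    rintro S' ⟨e', -, h⟩; exact e'.2.1 h
  have hval_es : ∀ S' : Set (EDel m ey es), es ∉ Subtype.val '' S' := by
    rintro S' ⟨e', -, h⟩; exact e'.2.2 h
  have hexval : ∀ S' : Set (EDel m ey es), ex ∈ Subtype.val '' S' → (⟨ex, hexey, hexes⟩ : EDel m ey es) ∈ S' := by
    rintro S' ⟨e', he', hval⟩
    have : e' = (⟨ex, hexey, hexes⟩ : EDel m ey es) := Subtype.ext hval
    exact this ▸ he'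
  have hexU2 : ex ∉ U2 := by
    rintro (h | h)
    · exact hfS2 (hexval _ h)
    · exact hexes h
  have hU1v : ∀ e ∈ U1, v ∈ G.ends e → e = ex ∨ e = ey := by
    intro e he hv'
    rcases hcls e hv' with rfl | rfl | rfl
    · exact Or.inl rfl
    · exact Or.inr rfl
    · rcases he with h | h
      · exact (hval_es _ h).elim
      · exact (heyes h.symm).elim
  have hU2v : ∀ e ∈ U2, v ∈ G.ends e → e = es := by
    intro e he hv'
    rcases hcls e hv' with rfl | rfl | rfl
    · exact (hexU2 he).elim
    · rcases he with h | h
      · exact (hval_ey _ h).elim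
      · exact (heyes h).elim
    · rfl
  -- union and disjointness
  have hUun : U1 ∪ U2 = Set.univ := by
    apply Set.eq_univ_iff_forall.mpr
    intro e
    by_cases h1 : e = ey
    · exact Or.inl (Or.inr h1)
    by_cases h2 : e = es
    · exact Or.inr (Or.inr h2)
    have : (⟨e, h1, h2⟩ : EDel m ey es) ∈ S1 ∪ S2 := Set.eq_univ_iff_forall.mp hun2 _
    rcases this with h | h
    · exact Or.inl (Or.inl ⟨⟨e, h1, h2⟩, h, rfl⟩)
    · exact Or.inr (Or.inl ⟨⟨e, h1, h2⟩, h, rfl⟩)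
  have hUdis : Disjoint U1 U2 := by
    rw [Set.disjoint_left]
    rintro e (h1 | h1) (h2 | h2)
    · obtain ⟨e1, he1, rfl⟩ := h1
      obtain ⟨e2, he2, hval⟩ := h2
      exact Set.disjoint_left.mp hdis2 he1 (Subtype.ext hval ▸ he2)
    · obtain ⟨e1, he1, rfl⟩ := h1
      exact e1.2.2 h2
    · obtain ⟨e2, he2, hval⟩ := h2
      exact e2.2.1 (hval.trans h1)
    · exact heyes (h1.symm.trans h2)
  -- U1 is a spanning tree
  have hkey1 : ∀ w z : Fin n, w ≠ v → z ≠ v → G.Reachable U1 w z := by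
    intro w z hw hz
    exact GDel_reach_down G v x y ex ey es hxv hyv hxy hcls hexey hexes hex hey S1 U1
      (fun e' he' _ => Or.inl ⟨e', he', rfl⟩)
      (fun _ => ⟨hexU1, heyU1⟩)
      (hT1.1 ⟨w, hw⟩ ⟨z, hz⟩)
  have hvxr : G.Reachable U1 v x := Adj.reach ⟨ex, hexU1, hex⟩
  have hU1conn : G.Connected U1 := by
    intro a b
    by_cases ha : a = v <;> by_cases hb : b = v
    · rw [ha, hb]; exact reach_refl
    · rw [ha]; exact hvxr.trans (hkey1 x b hxv hb)
    · rw [hb]; exact (hkey1 a x ha hxv).trans hvxr.symm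
    · exact hkey1 a b ha hb
  have hU1acyc : G.Acyclic U1 := by
    intro e he a b hq hre
    by_cases heex : e = ex
    · rw [heex] at hq hre
      have hq2 : s(v, x) = s(a, b) := by rw [← hex, hq]
      have hrvx : G.Reachable (U1 \ {ex}) v x := by
        rcases Sym2.eq_iff.mp hq2 with ⟨h1, h2⟩ | ⟨h1, h2⟩
        · rw [← h1, ← h2] at hre; exact hre
        · rw [← h1, ← h2] at hre; exact hre.symm
      have h0 : ∀ e ∈ U1 \ {ex}, v ∈ G.ends e → e = ey :=
        fun e he hv' => (hU1v e he.1 hv').resolve_left (fun h => he.2 h)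
      have h5 := (reach_leaf (Ne.symm hyv) h0 hey hrvx hxv).1 rfl
      have h6 := GDel_reach_up0 G v x y ex ey es hxv hyv hxy hcls hvex hvey hves
        ((U1 \ {ex}) \ {ey}) (S1 \ {(⟨ex, hexey, hexes⟩ : EDel m ey es)})
        (fun e he hv' => by
          rcases hU1v e he.1.1 hv' with h | h
          · exact he.1.2 h
          · exact he.2 h)
        (fun e he hE => by
          rcases he.1.1 with h | h
          · obtain ⟨e2, he2, rfl⟩ := h
            have heq : (⟨e2.val, hE⟩ : EDel m ey es) = e2 := Subtype.ext rfl
            exact ⟨by rw [heq]; exact he2, fun hh => he.1.2 (congrArg Subtype.val hh)⟩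
          · exact (he.2 h).elim)
        h5
      rw [jmap_ne hxv hyv, jmap_ne hxv hxv] at h6
      exact hT1.2 (⟨ex, hexey, hexes⟩ : EDel m ey es) hfS1 ⟨x, hxv⟩ ⟨y, hyv⟩
        (GDel_ends_ex G v x y ex ey es hxv hyv hxy hcls hexey hexes) h6.symm
    by_cases heey : e = ey
    · rw [heey] at hq hre
      have hq2 : s(v, y) = s(a, b) := by rw [← hey, hq]
      have hrvy : G.Reachable (U1 \ {ey}) v y := by
        rcases Sym2.eq_iff.mp hq2 with ⟨h1, h2⟩ | ⟨h1, h2⟩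
        · rw [← h1, ← h2] at hre; exact hre
        · rw [← h1, ← h2] at hre; exact hre.symm
      have h0 : ∀ e ∈ U1 \ {ey}, v ∈ G.ends e → e = ex :=
        fun e he hv' => (hU1v e he.1 hv').resolve_right (fun h => he.2 h)
      have h5 := (reach_leaf (Ne.symm hxv) h0 hex hrvy hyv).1 rfl
      have h6 := GDel_reach_up0 G v x y ex ey es hxv hyv hxy hcls hvex hvey hves
        ((U1 \ {ey}) \ {ex}) (S1 \ {(⟨ex, hexey, hexes⟩ : EDel m ey es)})
        (fun e he hv' => by
          rcases hU1v e he.1.1 hv' with h | h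
          · exact he.2 h
          · exact he.1.2 h)
        (fun e he hE => by
          rcases he.1.1 with h | h
          · obtain ⟨e2, he2, rfl⟩ := h
            have heq : (⟨e2.val, hE⟩ : EDel m ey es) = e2 := Subtype.ext rfl
            exact ⟨by rw [heq]; exact he2, fun hh => he.2 (congrArg Subtype.val hh)⟩
          · exact (hE.1 h).elim)
        h5
      rw [jmap_ne hxv hxv, jmap_ne hxv hyv] at h6
      exact hT1.2 (⟨ex, hexey, hexes⟩ : EDel m ey es) hfS1 ⟨x, hxv⟩ ⟨y, hyv⟩
        (GDel_ends_ex G v x y ex ey es hxv hyv hxy hcls hexey hexes) h6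
    · rcases he with hev | hev
      swap
      · exact heey hev
      obtain ⟨e1, he1, rfl⟩ := hev
      have hnv : v ∉ G.ends e1.val := fun hv' => by
        rcases hcls _ hv' with h | h | h
        · exact heex h
        · exact e1.2.1 h
        · exact e1.2.2 h
      have ha : a ≠ v := fun hh => hnv (by rw [hq, ← hh]; exact Sym2.mem_mk_left a b)
      have hb : b ≠ v := fun hh => hnv (by rw [hq, ← hh]; exact Sym2.mem_mk_right a b)
      have h6 := GDel_reach_up2 G v x y ex ey es hxv hyv hxy hcls hexey hexes hex hey hves
        (U1 \ {e1.val}) (S1 \ {e1})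
        (fun e he hv' => hU1v e he.1 hv')
        ⟨hfS1, fun hh => heex (congrArg Subtype.val hh).symm⟩
        (fun e he hv' hE => by
          rcases he.1 with h | h
          · obtain ⟨e2, he2, rfl⟩ := h
            have heq : (⟨e2.val, hE⟩ : EDel m ey es) = e2 := Subtype.ext rfl
            exact ⟨by rw [heq]; exact he2, fun hh => he.2 (congrArg Subtype.val hh)⟩
          · exact (hv' (h ▸ hvey)).elim)
        hre
      rw [jmap_ne hxv ha, jmap_ne hxv hb] at h6
      exact hT1.2 e1 he1 ⟨a, ha⟩ ⟨b, hb⟩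
        (GDel_ends_pair G v x y ex ey es hxv hyv hxy hcls e1 heex hq ha hb) h6
  -- U2 is a spanning tree
  have hkey2 : ∀ w z : Fin n, w ≠ v → z ≠ v → G.Reachable U2 w z := by
    intro w z hw hz
    exact GDel_reach_down G v x y ex ey es hxv hyv hxy hcls hexey hexes hex hey S2 U2
      (fun e' he' _ => Or.inl ⟨e', he', rfl⟩)
      (fun hf => (hfS2 hf).elim)
      (hT2.1 ⟨w, hw⟩ ⟨z, hz⟩)
  have hvsr : G.Reachable U2 v s := Adj.reach ⟨es, hesU2, hes⟩
  have hU2conn : G.Connected U2 := by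
    intro a b
    by_cases ha : a = v <;> by_cases hb : b = v
    · rw [ha, hb]; exact reach_refl
    · rw [ha]; exact hvsr.trans (hkey2 s b hsv hb)
    · rw [hb]; exact (hkey2 a s ha hsv).trans hvsr.symm
    · exact hkey2 a b ha hb
  have hU2acyc : G.Acyclic U2 := by
    intro e he a b hq hre
    by_cases hees : e = es
    · rw [hees] at hq hre
      have hq2 : s(v, s) = s(a, b) := by rw [← hes, hq]
      have hrvs : G.Reachable (U2 \ {es}) v s := by
        rcases Sym2.eq_iff.mp hq2 with ⟨h1, h2⟩ | ⟨h1, h2⟩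
        · rw [← h1, ← h2] at hre; exact hre
        · rw [← h1, ← h2] at hre; exact hre.symm
      have h0 : ∀ e ∈ U2 \ {es}, v ∉ G.ends e :=
        fun e he hv' => he.2 (hU2v e he.1 hv')
      exact hsv (reach_eq_of_no_edge h0 hrvs).symm
    · rcases he with hev | hev
      swap
      · exact hees hev
      obtain ⟨e1, he1, rfl⟩ := hev
      have hnex : e1.val ≠ ex := fun h =>
        hfS2 (by rw [← (Subtype.ext h : e1 = ⟨ex, hexey, hexes⟩)]; exact he1)
      have hnv : v ∉ G.ends e1.val := fun hv' => by
        rcases hcls _ hv' with h | h | h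
        · exact hnex h
        · exact e1.2.1 h
        · exact e1.2.2 h
      have ha : a ≠ v := fun hh => hnv (by rw [hq, ← hh]; exact Sym2.mem_mk_left a b)
      have hb : b ≠ v := fun hh => hnv (by rw [hq, ← hh]; exact Sym2.mem_mk_right a b)
      have h0 : ∀ e ∈ U2 \ {e1.val}, v ∈ G.ends e → e = es :=
        fun e he hv' => hU2v e he.1 hv'
      have h5 := (reach_leaf (Ne.symm hsv) h0 hes hre hb).2 ha
      have h6 := GDel_reach_up0 G v x y ex ey es hxv hyv hxy hcls hvex hvey hves
        ((U2 \ {e1.val}) \ {es}) (S2 \ {e1})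
        (fun e he hv' => he.2 (hU2v e he.1.1 hv'))
        (fun e he hE => by
          rcases he.1.1 with h | h
          · obtain ⟨e2, he2, rfl⟩ := h
            have heq : (⟨e2.val, hE⟩ : EDel m ey es) = e2 := Subtype.ext rfl
            exact ⟨by rw [heq]; exact he2, fun hh => he.1.2 (congrArg Subtype.val hh)⟩
          · exact (hE.2 h).elim)
        h5
      rw [jmap_ne hxv ha, jmap_ne hxv hb] at h6
      exact hT2.2 e1 he1 ⟨a, ha⟩ ⟨b, hb⟩
        (GDel_ends_pair G v x y ex ey es hxv hyv hxy hcls e1 hnex hq ha hb) h6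
  -- balance
  have hbalU : G.Balanced c U1 U2 := by
    intro w
    by_cases hwv : w = v
    · subst hwv
      have hI1 : G.incEdges U1 w = {ex, ey} := by
        ext e
        constructor
        · rintro ⟨he, hv'⟩
          rcases hU1v e he hv' with h | h
          · exact Or.inl h
          · exact Or.inr h
        · rintro (rfl | rfl)
          · exact ⟨hexU1, hvex⟩
          · exact ⟨heyU1, hvey⟩
      have hI2 : G.incEdges U2 w = {es} := by
        ext e
        constructor
        · rintro ⟨he, hv'⟩
          exact hU2v e he hv'
        · rintro rfl
          exact ⟨hesU2, hves⟩
      show |((G.incEdges U1 w).ncard : ℤ) - ((G.incEdges U2 w).ncard : ℤ)| ≤ (c : ℤ)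
      rw [hI1, hI2, Set.ncard_pair hexey, Set.ncard_singleton]
      rw [abs_le]
      constructor
      · have : (0 : ℤ) ≤ c := Int.ofNat_nonneg c
        omega
      · have : (2 : ℤ) ≤ c := by exact_mod_cast hc
        omega
    by_cases hws : w = s
    · rw [hws]
      have hIun : G.incEdges Set.univ s = G.incEdges U1 s ∪ G.incEdges U2 s := by
        ext e
        constructor
        · rintro ⟨-, hv'⟩
          rcases Set.eq_univ_iff_forall.mp hUun e with h | h
          · exact Or.inl ⟨h, hv'⟩
          · exact Or.inr ⟨h, hv'⟩
        · rintro (⟨he, hv'⟩ | ⟨he, hv'⟩) <;> exact ⟨trivial, hv'⟩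
      have hIdis : Disjoint (G.incEdges U1 s) (G.incEdges U2 s) :=
        Set.disjoint_left.mpr (fun {e} h1 h2 => Set.disjoint_left.mp hUdis h1.1 h2.1)
      have hsum : G.deg Set.univ s = G.deg U1 s + G.deg U2 s := by
        show (G.incEdges Set.univ s).ncard = _
        rw [hIun, Set.ncard_union_eq hIdis (Set.toFinite _) (Set.toFinite _)]
        rfl
      have hd2 : 0 < G.deg U2 s :=
        Set.Nonempty.ncard_pos (Set.toFinite _)
          ⟨es, hesU2, by rw [hes]; exact Sym2.mem_mk_right v s⟩
      have hd1 : 0 < G.deg U1 s := by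
        obtain ⟨e, he, hse⟩ := exists_edge (hU1conn s v) hsv
        exact Set.Nonempty.ncard_pos (Set.toFinite _) ⟨e, he, hse⟩
      rw [abs_le]
      constructor
      · omega
      · omega
    by_cases hwx : w = x
    · rw [hwx]
      have hI1 := GDel_incEdges_val G v x y ex ey es hxv hyv hxy hcls hexey hexes S1 ey x hxv
        (by rw [hey, Sym2.mem_iff]; rintro (h | h); exacts [hxv h, hxy h])
        (fun _ => by
          rw [GDel_ends_ex G v x y ex ey es hxv hyv hxy hcls hexey hexes, hex]
          exact iff_of_true (Sym2.mem_mk_left _ _) (Sym2.mem_mk_right v x))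
      have hI2 := GDel_incEdges_val G v x y ex ey es hxv hyv hxy hcls hexey hexes S2 es x hxv
        (by rw [hes, Sym2.mem_iff]; rintro (h | h); exacts [hxv h, hxs h])
        (fun h1 => (hfS2 h1).elim)
      have hdeg1 : G.deg U1 x = (GDel G v x y ex ey es hxv hyv hxy hcls).deg S1 ⟨x, hxv⟩ := by
        show (G.incEdges U1 x).ncard = _
        rw [hI1, Set.ncard_image_of_injective _ Subtype.val_injective]
        rfl
      have hdeg2 : G.deg U2 x = (GDel G v x y ex ey es hxv hyv hxy hcls).deg S2 ⟨x, hxv⟩ := by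
        show (G.incEdges U2 x).ncard = _
        rw [hI2, Set.ncard_image_of_injective _ Subtype.val_injective]
        rfl
      rw [hdeg1, hdeg2]
      exact hbal2 ⟨x, hxv⟩
    by_cases hwy : w = y
    · rw [hwy]
      have hkinj : Function.Injective
          (fun e' : EDel m ey es => if e' = ⟨ex, hexey, hexes⟩ then ey else e'.val) := by
        intro e1 e2 h
        dsimp only at h
        by_cases h1 : e1 = ⟨ex, hexey, hexes⟩ <;> by_cases h2 : e2 = ⟨ex, hexey, hexes⟩
        · rw [h1, h2]
        · rw [if_pos h1, if_neg h2] at h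
          exact (e2.2.1 h.symm).elim
        · rw [if_neg h1, if_pos h2] at h
          exact (e1.2.1 h).elim
        · rw [if_neg h1, if_neg h2] at h
          exact Subtype.ext h
      have himg : (fun e' : EDel m ey es => if e' = ⟨ex, hexey, hexes⟩ then ey else e'.val)
          '' ((GDel G v x y ex ey es hxv hyv hxy hcls).incEdges S1 ⟨y, hyv⟩) = G.incEdges U1 y := by
        ext e
        constructor
        · rintro ⟨e1, ⟨he1, hy'⟩, rfl⟩
          dsimp only
          by_cases h1 : e1 = ⟨ex, hexey, hexes⟩
          · rw [if_pos h1]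
            exact ⟨heyU1, by rw [hey]; exact Sym2.mem_mk_right v y⟩
          · rw [if_neg h1]
            have h1v : e1.val ≠ ex := fun h => h1 (Subtype.ext h)
            exact ⟨Or.inl ⟨e1, he1, rfl⟩, (GDel_mem_ends G v x y ex ey es hxv hyv hxy hcls e1 h1v hyv).mp hy'⟩
        · rintro ⟨he, hye⟩
          rcases he with hev | hev
          · obtain ⟨e1, he1, rfl⟩ := hev
            have h1 : e1.val ≠ ex := by
              intro h
              rw [h, hex, Sym2.mem_iff] at hye
              rcases hye with h2 | h2
              · exact hyv h2
              · exact hxy h2.symm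
            refine ⟨e1, ⟨he1, (GDel_mem_ends G v x y ex ey es hxv hyv hxy hcls e1 h1 hyv).mpr hye⟩, ?_⟩
            dsimp only
            rw [if_neg (fun hh => h1 (congrArg Subtype.val hh))]
          · refine ⟨⟨ex, hexey, hexes⟩, ⟨hfS1, ?_⟩, ?_⟩
            · rw [GDel_ends_ex G v x y ex ey es hxv hyv hxy hcls hexey hexes]
              exact Sym2.mem_mk_right _ _
            · dsimp only
              rw [if_pos rfl]
              exact hev.symm
      have hdeg1 : G.deg U1 y = (GDel G v x y ex ey es hxv hyv hxy hcls).deg S1 ⟨y, hyv⟩ := by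
        show (G.incEdges U1 y).ncard = _
        rw [← himg, Set.ncard_image_of_injective _ hkinj]
        rfl
      have hI2 := GDel_incEdges_val G v x y ex ey es hxv hyv hxy hcls hexey hexes S2 es y hyv
        (by rw [hes, Sym2.mem_iff]; rintro (h | h); exacts [hyv h, hys h])
        (fun h1 => (hfS2 h1).elim)
      have hdeg2 : G.deg U2 y = (GDel G v x y ex ey es hxv hyv hxy hcls).deg S2 ⟨y, hyv⟩ := by
        show (G.incEdges U2 y).ncard = _
        rw [hI2, Set.ncard_image_of_injective _ Subtype.val_injective]
        rfl
      rw [hdeg1, hdeg2]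
      exact hbal2 ⟨y, hyv⟩
    · have hI1 := GDel_incEdges_val G v x y ex ey es hxv hyv hxy hcls hexey hexes S1 ey w hwv
        (by rw [hey, Sym2.mem_iff]; rintro (h | h); exacts [hwv h, hwy h])
        (fun _ => by
          rw [GDel_ends_ex G v x y ex ey es hxv hyv hxy hcls hexey hexes, hex]
          refine iff_of_false ?_ ?_
          · rw [Sym2.mem_iff]
            rintro (h | h)
            · exact hwx (congrArg Subtype.val h)
            · exact hwy (congrArg Subtype.val h)
          · rw [Sym2.mem_iff]
            rintro (h | h)
            · exact hwv h
            · exact hwx h)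
      have hI2 := GDel_incEdges_val G v x y ex ey es hxv hyv hxy hcls hexey hexes S2 es w hwv
        (by rw [hes, Sym2.mem_iff]; rintro (h | h); exacts [hwv h, hws h])
        (fun h1 => (hfS2 h1).elim)
      have hdeg1 : G.deg U1 w = (GDel G v x y ex ey es hxv hyv hxy hcls).deg S1 ⟨w, hwv⟩ := by
        show (G.incEdges U1 w).ncard = _
        rw [hI1, Set.ncard_image_of_injective _ Subtype.val_injective]
        rfl
      have hdeg2 : G.deg U2 w = (GDel G v x y ex ey es hxv hyv hxy hcls).deg S2 ⟨w, hwv⟩ := by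
        show (G.incEdges U2 w).ncard = _
        rw [hI2, Set.ncard_image_of_injective _ Subtype.val_injective]
        rfl
      rw [hdeg1, hdeg2]
      exact hbal2 ⟨w, hwv⟩
  exact ⟨U1, U2, ⟨hUun, hUdis, ⟨hU1conn, hU1acyc⟩, ⟨hU2conn, hU2acyc⟩⟩, hbalU⟩

/-- Key contradiction: in a vertex-minimal counterexample there is no double tree
decomposition putting `es` in one tree and `ex, ey` in the other. -/
lemma suppress_contradiction (c : ℕ) (hc : 2 ≤ c)
    (G : Multigraph (Fin n) (Fin m))
    (hbal : ¬ ∃ T1 T2 : Set (Fin m), G.IsDTD T1 T2 ∧ G.Balanced c T1 T2)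
    (hmin : ∀ (n' m' : ℕ) (G' : Multigraph (Fin n') (Fin m')),
      G'.IsDoubleTree →
      (¬ ∃ T1 T2 : Set (Fin m'), G'.IsDTD T1 T2 ∧ G'.Balanced c T1 T2) → n ≤ n')
    (v x y s : Fin n) (hv : G.deg Set.univ v = 3)
    (hxy : x ≠ y) (hxs : x ≠ s) (hys : y ≠ s)
    (hsmalls : G.deg Set.univ s ≤ c + 2)
    (ex ey es : Fin m)
    (hex : G.ends ex = s(v, x)) (hey : G.ends ey = s(v, y)) (hes : G.ends es = s(v, s))
    (A B : Set (Fin m))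
    (hun : A ∪ B = Set.univ) (hdis : Disjoint A B)
    (hTA : G.IsSpanningTree A) (hTB : G.IsSpanningTree B)
    (hesA : es ∈ A) (hexB : ex ∈ B) (heyB : ey ∈ B) : False := by
  classical
  have hxv : x ≠ v := fun h => G.loopless ex (by rw [hex, Sym2.mk_isDiag_iff]; exact h.symm)
  have hyv : y ≠ v := fun h => G.loopless ey (by rw [hey, Sym2.mk_isDiag_iff]; exact h.symm)
  have hsv : s ≠ v := fun h => G.loopless es (by rw [hes, Sym2.mk_isDiag_iff]; exact h.symm)
  have hvex : v ∈ G.ends ex := by rw [hex]; exact Sym2.mem_mk_left v x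
  have hvey : v ∈ G.ends ey := by rw [hey]; exact Sym2.mem_mk_left v y
  have hves : v ∈ G.ends es := by rw [hes]; exact Sym2.mem_mk_left v s
  have hexey : ex ≠ ey := by
    intro h
    have h2 : s(v, x) = s(v, y) := by rw [← hex, h, hey]
    rcases Sym2.eq_iff.mp h2 with ⟨-, h3⟩ | ⟨h3, -⟩
    · exact hxy h3
    · exact hyv h3.symm
  have hexes : ex ≠ es := by
    intro h
    have h2 : s(v, x) = s(v, s) := by rw [← hex, h, hes]
    rcases Sym2.eq_iff.mp h2 with ⟨-, h3⟩ | ⟨h3, -⟩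
    · exact hxs h3
    · exact hsv h3.symm
  have heyes : ey ≠ es := by
    intro h
    have h2 : s(v, y) = s(v, s) := by rw [← hey, h, hes]
    rcases Sym2.eq_iff.mp h2 with ⟨-, h3⟩ | ⟨h3, -⟩
    · exact hys h3
    · exact hsv h3.symm
  have hcls : ∀ e, v ∈ G.ends e → e = ex ∨ e = ey ∨ e = es := by
    have hsub : ({ex, ey, es} : Set (Fin m)) ⊆ G.incEdges Set.univ v := by
      rintro e (rfl | rfl | rfl)
      · exact ⟨trivial, hvex⟩
      · exact ⟨trivial, hvey⟩
      · exact ⟨trivial, hves⟩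
    have h3 : ({ex, ey, es} : Set (Fin m)).ncard = 3 := by
      rw [Set.ncard_insert_of_notMem (by simp [hexey, hexes]) (Set.toFinite _),
        Set.ncard_pair heyes]
    have heq := Set.eq_of_subset_of_ncard_le hsub
      (by rw [h3]; exact le_of_eq hv) (Set.toFinite _)
    intro e hve
    have hmem : e ∈ G.incEdges Set.univ v := ⟨trivial, hve⟩
    rw [← heq] at hmem
    simpa using hmem
  have hdtd' := GDel_dtd G v x y ex ey es hxv hyv hxy hcls hexey hexes s hsv
    hex hey hes A B hun hdis hTA hTB hesA hexB heyB
  by_cases hbc : ∃ S1 S2, (GDel G v x y ex ey es hxv hyv hxy hcls).IsDTD S1 S2 ∧ (GDel G v x y ex ey es hxv hyv hxy hcls).Balanced c S1 S2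
  · obtain ⟨S1, S2, hdtd2, hbal2⟩ := hbc
    have main : ∀ S1 S2, (GDel G v x y ex ey es hxv hyv hxy hcls).IsDTD S1 S2 → (GDel G v x y ex ey es hxv hyv hxy hcls).Balanced c S1 S2 →
        (⟨ex, hexey, hexes⟩ : EDel m ey es) ∈ S1 → False := by
      intro S1 S2 hd hb hf
      obtain ⟨U1, U2, hU, hbU⟩ := GDel_lift G v x y ex ey es c hc hxv hyv hxy hcls
        hexey hexes heyes s hsv hxs hys hex hey hes hsmalls S1 S2 hd hb hf
      exact hbal ⟨U1, U2, hU, hbU⟩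
    have hfmem : (⟨ex, hexey, hexes⟩ : EDel m ey es) ∈ S1 ∪ S2 :=
      Set.eq_univ_iff_forall.mp hdtd2.1 _
    rcases hfmem with h | h
    · exact main S1 S2 hdtd2 hbal2 h
    · refine main S2 S1 ⟨?_, hdtd2.2.1.symm, hdtd2.2.2.2, hdtd2.2.2.1⟩
        (fun w => by rw [abs_sub_comm]; exact hbal2 w) h
      rw [Set.union_comm]
      exact hdtd2.1
  · have hdt'' := doubletree_map (σ := Fintype.equivFin (VDel n v))
      (τ := Fintype.equivFin (EDel m ey es)) ⟨_, _, hdtd'⟩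
    have hno'' := nobal_map (σ := Fintype.equivFin (VDel n v))
      (τ := Fintype.equivFin (EDel m ey es)) hbc
    have hle := hmin _ _ _ hdt'' hno''
    have hcard : Fintype.card (VDel n v) = n - 1 := by
      have h1 : Fintype.card {w : Fin n // ¬ w = v}
          = Fintype.card (Fin n) - Fintype.card {w : Fin n // w = v} :=
        Fintype.card_subtype_compl _
      rw [Fintype.card_fin, Fintype.card_subtype_eq] at h1
      exact h1
    have hpos : 0 < n := v.pos
    rw [hcard] at hle
    omega

end GDel

end Suppress

end Multigraph

open Multigraph

/-- **Theorem (Statement 10).** In a vertex-minimal double tree `G` with no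
`c`-balanced double tree decomposition (`c ≥ 2`): let `v` be a poor 3-vertex
with big neighbours `x, y` and small neighbour `s`, joined to them by edges
`ex, ey, es`, and let `T1 ⊔ T2` be a double tree decomposition with
`es ∈ T1`.  Then (i) exactly one of `ex, ey` lies in `T1`; (ii) if
`ey ∈ T2` then `(T1 - ex + ey) ⊔ (T2 + ex - ey)` is again a double tree
decomposition; (iii) the path from `x` to `y` in `T1` avoids `s`, i.e. `x`
and `y` are joined in `T1` using no edge incident to `s`. -/
theorem poor_three_vertex_structure (c : ℕ) (hc : 2 ≤ c) (n m : ℕ)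
    (G : Multigraph (Fin n) (Fin m))
    (hG : G.IsDoubleTree) (hbal : G.NoBalancedDTD c)
    (hmin : ∀ (n' m' : ℕ) (G' : Multigraph (Fin n') (Fin m')),
      G'.IsDoubleTree → G'.NoBalancedDTD c → n ≤ n')
    (v x y s : Fin n) (hv : G.deg Set.univ v = 3)
    (hxy : x ≠ y) (hxs : x ≠ s) (hys : y ≠ s)
    (hbigx : G.Big c x) (hbigy : G.Big c y) (hsmalls : G.Small c s)
    (ex ey es : Fin m)
    (hex : G.ends ex = s(v, x)) (hey : G.ends ey = s(v, y))
    (hes : G.ends es = s(v, s))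
    (T1 T2 : Set (Fin m)) (hDTD : G.IsDTD T1 T2) (hesT1 : es ∈ T1) :
    Xor' (ex ∈ T1) (ey ∈ T1) ∧
    (ey ∈ T2 → G.IsDTD ((T1 \ {ex}) ∪ {ey}) ((T2 \ {ey}) ∪ {ex})) ∧
    G.Reachable {e ∈ T1 | s ∉ G.ends e} x y := by
  classical
  obtain ⟨hun, hdis, hT1, hT2⟩ := hDTD
  have hxv : x ≠ v := fun h => G.loopless ex (by rw [hex, Sym2.mk_isDiag_iff]; exact h.symm)
  have hyv : y ≠ v := fun h => G.loopless ey (by rw [hey, Sym2.mk_isDiag_iff]; exact h.symm)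
  have hsv : s ≠ v := fun h => G.loopless es (by rw [hes, Sym2.mk_isDiag_iff]; exact h.symm)
  have hvex : v ∈ G.ends ex := by rw [hex]; exact Sym2.mem_mk_left v x
  have hvey : v ∈ G.ends ey := by rw [hey]; exact Sym2.mem_mk_left v y
  have hves : v ∈ G.ends es := by rw [hes]; exact Sym2.mem_mk_left v s
  have hexey : ex ≠ ey := by
    intro h
    have h2 : s(v, x) = s(v, y) := by rw [← hex, h, hey]
    rcases Sym2.eq_iff.mp h2 with ⟨-, h3⟩ | ⟨h3, -⟩
    · exact hxy h3
    · exact hyv h3.symm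
  have hexes : ex ≠ es := by
    intro h
    have h2 : s(v, x) = s(v, s) := by rw [← hex, h, hes]
    rcases Sym2.eq_iff.mp h2 with ⟨-, h3⟩ | ⟨h3, -⟩
    · exact hxs h3
    · exact hsv h3.symm
  have heyes : ey ≠ es := by
    intro h
    have h2 : s(v, y) = s(v, s) := by rw [← hey, h, hes]
    rcases Sym2.eq_iff.mp h2 with ⟨-, h3⟩ | ⟨h3, -⟩
    · exact hys h3
    · exact hsv h3.symm
  have hcls : ∀ e, v ∈ G.ends e → e = ex ∨ e = ey ∨ e = es := by
    have hsub : ({ex, ey, es} : Set (Fin m)) ⊆ G.incEdges Set.univ v := by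
      rintro e (rfl | rfl | rfl)
      · exact ⟨trivial, hvex⟩
      · exact ⟨trivial, hvey⟩
      · exact ⟨trivial, hves⟩
    have h3 : ({ex, ey, es} : Set (Fin m)).ncard = 3 := by
      rw [Set.ncard_insert_of_notMem (by simp [hexey, hexes]) (Set.toFinite _),
        Set.ncard_pair heyes]
    have heq := Set.eq_of_subset_of_ncard_le hsub
      (by rw [h3]; exact le_of_eq hv) (Set.toFinite _)
    intro e hve
    have hmem : e ∈ G.incEdges Set.univ v := ⟨trivial, hve⟩
    rw [← heq] at hmem
    simpa using hmem
  -- specialized contradiction lemma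
  have lemA : ∀ A B : Set (Fin m), A ∪ B = Set.univ → Disjoint A B →
      G.IsSpanningTree A → G.IsSpanningTree B → es ∈ A → ex ∈ B → ey ∈ B → False :=
    fun A B h1 h2 h3 h4 h5 h6 h7 =>
      suppress_contradiction c hc G hbal hmin v x y s hv hxy hxs hys hsmalls
        ex ey es hex hey hes A B h1 h2 h3 h4 h5 h6 h7
  -- part (i)
  have hnotboth : ¬ (ex ∈ T1 ∧ ey ∈ T1) := by
    rintro ⟨h1, h2⟩
    have h0 : ∀ e ∈ T2, v ∉ G.ends e := by
      intro e he hv'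
      rcases hcls e hv' with rfl | rfl | rfl
      · exact Set.disjoint_left.mp hdis h1 he
      · exact Set.disjoint_left.mp hdis h2 he
      · exact Set.disjoint_left.mp hdis hesT1 he
    exact hxv (reach_eq_of_no_edge h0 (hT2.1 v x)).symm
  have hnotnone : ¬ (ex ∉ T1 ∧ ey ∉ T1) := by
    rintro ⟨h1, h2⟩
    have hexT2 : ex ∈ T2 := by
      rcases Set.eq_univ_iff_forall.mp hun ex with h | h
      · exact absurd h h1
      · exact h
    have heyT2 : ey ∈ T2 := by
      rcases Set.eq_univ_iff_forall.mp hun ey with h | h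
      · exact absurd h h2
      · exact h
    exact lemA T1 T2 hun hdis hT1 hT2 hesT1 hexT2 heyT2
  have hxor : Xor' (ex ∈ T1) (ey ∈ T1) := by
    by_cases h1 : ex ∈ T1 <;> by_cases h2 : ey ∈ T1
    · exact (hnotboth ⟨h1, h2⟩).elim
    · exact Or.inl ⟨h1, h2⟩
    · exact Or.inr ⟨h2, h1⟩
    · exact (hnotnone ⟨h1, h2⟩).elim
  -- key component lemma (symmetric in the two big neighbours)
  have keylem : ∀ (a b : Fin n) (ea eb : Fin m),
      G.ends ea = s(v, a) → G.ends eb = s(v, b) → ea ≠ es →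
      (∀ e, v ∈ G.ends e → e = ea ∨ e = eb ∨ e = es) →
      (∀ U1 U2 : Set (Fin m), U1 ∪ U2 = Set.univ → Disjoint U1 U2 →
        G.IsSpanningTree U1 → G.IsSpanningTree U2 →
        es ∈ U2 → ea ∈ U1 → eb ∈ U1 → False) →
      ea ∈ T1 → eb ∈ T2 → ¬ G.Reachable (T1 \ {ea}) v b := by
    intro a b ea eb hqa hqb heaes hclsab hfin heaT1 hebT2 hreach
    have hbv : b ≠ v := fun h =>
      G.loopless eb (by rw [hqb, Sym2.mk_isDiag_iff]; exact h.symm)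
    have hebes : eb ≠ es := fun h => Set.disjoint_left.mp hdis hesT1 (h ▸ hebT2)
    have hebT1 : eb ∉ T1 := fun h => Set.disjoint_left.mp hdis h hebT2
    have hesT2 : es ∉ T2 := fun h => Set.disjoint_left.mp hdis hesT1 h
    -- only es is incident to v in T1 \ {ea}
    have h0 : ∀ e ∈ T1 \ {ea}, v ∈ G.ends e → e = es := by
      intro e he hv'
      rcases hclsab e hv' with rfl | rfl | rfl
      · exact (he.2 rfl).elim
      · exact (Set.disjoint_left.mp hdis he.1 hebT2).elim
      · rfl
    have hsb : G.Reachable ((T1 \ {ea}) \ {es}) s b :=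
      (reach_leaf (Ne.symm hsv) h0 hes hreach hbv).1 rfl
    have hsb' : G.Reachable (T1 \ {es}) s b := hsb.mono (by
      rintro e ⟨⟨he1, -⟩, he2⟩; exact ⟨he1, he2⟩)
    have hvb : ¬ G.Reachable (T1 \ {es}) v b := by
      intro h
      exact hT1.2 es hesT1 v s hes (h.trans hsb'.symm)
    have hU1tree := swap_tree hT1 hesT1 hebT1 hqb hvb
    have hvs2 : ¬ G.Reachable (T2 \ {eb}) v s := by
      intro h
      have h0' : ∀ e ∈ T2 \ {eb}, v ∉ G.ends e := by
        intro e he hv'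
        rcases hclsab e hv' with rfl | rfl | rfl
        · exact Set.disjoint_left.mp hdis heaT1 he.1
        · exact he.2 rfl
        · exact hesT2 he.1
      exact hsv (reach_eq_of_no_edge h0' h).symm
    have hU2tree := swap_tree hT2 hebT2 hesT2 hes hvs2
    have hunU : ((T1 \ {es}) ∪ {eb}) ∪ ((T2 \ {eb}) ∪ {es}) = Set.univ := by
      apply Set.eq_univ_iff_forall.mpr
      intro e
      by_cases h1 : e = es
      · exact Or.inr (Or.inr h1)
      by_cases h2 : e = eb
      · exact Or.inl (Or.inr h2)
      rcases Set.eq_univ_iff_forall.mp hun e with h | h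
      · exact Or.inl (Or.inl ⟨h, h1⟩)
      · exact Or.inr (Or.inl ⟨h, h2⟩)
    have hdisU : Disjoint ((T1 \ {es}) ∪ {eb}) ((T2 \ {eb}) ∪ {es}) := by
      rw [Set.disjoint_left]
      rintro e (⟨h1, h2⟩ | h1) (⟨h3, h4⟩ | h3)
      · exact Set.disjoint_left.mp hdis h1 h3
      · exact h2 h3
      · exact h4 h1
      · exact hebes (h1.symm.trans h3)
    exact hfin ((T1 \ {es}) ∪ {eb}) ((T2 \ {eb}) ∪ {es}) hunU hdisU hU1tree hU2tree
      (Or.inr rfl) (Or.inl ⟨heaT1, heaes⟩) (Or.inr rfl)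
  -- the two instantiations of keylem
  have hfinxy : ∀ U1 U2 : Set (Fin m), U1 ∪ U2 = Set.univ → Disjoint U1 U2 →
      G.IsSpanningTree U1 → G.IsSpanningTree U2 →
      es ∈ U2 → ex ∈ U1 → ey ∈ U1 → False := by
    intro U1 U2 h1 h2 h3 h4 h5 h6 h7
    exact lemA U2 U1 (by rw [Set.union_comm]; exact h1) h2.symm h4 h3 h5 h6 h7
  have hfinyx : ∀ U1 U2 : Set (Fin m), U1 ∪ U2 = Set.univ → Disjoint U1 U2 →
      G.IsSpanningTree U1 → G.IsSpanningTree U2 →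
      es ∈ U2 → ey ∈ U1 → ex ∈ U1 → False := by
    intro U1 U2 h1 h2 h3 h4 h5 h6 h7
    exact lemA U2 U1 (by rw [Set.union_comm]; exact h1) h2.symm h4 h3 h5 h7 h6
  have hclsyx : ∀ e, v ∈ G.ends e → e = ey ∨ e = ex ∨ e = es := by
    intro e h
    rcases hcls e h with h1 | h1 | h1
    · exact Or.inr (Or.inl h1)
    · exact Or.inl h1
    · exact Or.inr (Or.inr h1)
  -- part (ii)
  have hswap : ey ∈ T2 → G.IsDTD ((T1 \ {ex}) ∪ {ey}) ((T2 \ {ey}) ∪ {ex}) := by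
    intro heyT2
    have heyT1 : ey ∉ T1 := fun h => Set.disjoint_left.mp hdis h heyT2
    have hexT1 : ex ∈ T1 := by
      rcases hxor with ⟨h1, -⟩ | ⟨h1, -⟩
      · exact h1
      · exact absurd h1 heyT1
    have hknot := keylem x y ex ey hex hey hexes hcls hfinxy hexT1 heyT2
    have hU1tree := swap_tree hT1 hexT1 heyT1 hey hknot
    have hexT2 : ex ∉ T2 := fun h => Set.disjoint_left.mp hdis hexT1 h
    have hvx2 : ¬ G.Reachable (T2 \ {ey}) v x := by
      intro h
      have h0' : ∀ e ∈ T2 \ {ey}, v ∉ G.ends e := by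
        intro e he hv'
        rcases hcls e hv' with rfl | rfl | rfl
        · exact Set.disjoint_left.mp hdis hexT1 he.1
        · exact he.2 rfl
        · exact Set.disjoint_left.mp hdis hesT1 he.1
      exact hxv (reach_eq_of_no_edge h0' h).symm
    have hU2tree := swap_tree hT2 heyT2 hexT2 hex hvx2
    refine ⟨?_, ?_, hU1tree, hU2tree⟩
    · apply Set.eq_univ_iff_forall.mpr
      intro e
      by_cases h1 : e = ex
      · exact Or.inr (Or.inr h1)
      by_cases h2 : e = ey
      · exact Or.inl (Or.inr h2)
      rcases Set.eq_univ_iff_forall.mp hun e with h | h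
      · exact Or.inl (Or.inl ⟨h, h1⟩)
      · exact Or.inr (Or.inl ⟨h, h2⟩)
    · rw [Set.disjoint_left]
      rintro e (⟨h1, h2⟩ | h1) (⟨h3, h4⟩ | h3)
      · exact Set.disjoint_left.mp hdis h1 h3
      · exact h2 h3
      · exact h4 h1
      · exact hexey (h3.symm.trans h1)
  -- part (iii)
  have hiii : G.Reachable {e ∈ T1 | s ∉ G.ends e} x y := by
    have hsub : ∀ e0 : Fin m, {e ∈ T1 \ {e0} | s ∉ G.ends e} ⊆ {e ∈ T1 | s ∉ G.ends e} := by
      rintro e0 e ⟨⟨h1, -⟩, h2⟩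
      exact ⟨h1, h2⟩
    rcases hxor with ⟨hexT1, heyT1⟩ | ⟨heyT1, hexT1⟩
    · have heyT2 : ey ∈ T2 := by
        rcases Set.eq_univ_iff_forall.mp hun ey with h | h
        · exact absurd h heyT1
        · exact h
      have hknot := keylem x y ex ey hex hey hexes hcls hfinxy hexT1 heyT2
      have hxyreach : G.Reachable (T1 \ {ex}) x y := by
        rcases reach_split hex (hT1.1 x y) with h1 | ⟨h1, h2⟩ | ⟨h1, h2⟩
        · exact h1
        · exact h2
        · exact (hknot h2).elim
      have hxs' : ¬ G.Reachable (T1 \ {ex}) x s := by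
        intro h
        have hesmem : es ∈ T1 \ {ex} := ⟨hesT1, fun hh => hexes hh.symm⟩
        exact hT1.2 ex hexT1 v x hex ((Adj.reach ⟨es, hesmem, hes⟩).trans h.symm)
      exact (reach_avoid hxyreach hxs').mono (hsub ex)
    · have hexT2 : ex ∈ T2 := by
        rcases Set.eq_univ_iff_forall.mp hun ex with h | h
        · exact absurd h hexT1
        · exact h
      have hknot := keylem y x ey ex hey hex heyes hclsyx hfinyx heyT1 hexT2
      have hyxreach : G.Reachable (T1 \ {ey}) y x := by
        rcases reach_split hey (hT1.1 y x) with h1 | ⟨h1, h2⟩ | ⟨h1, h2⟩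
        · exact h1
        · exact h2
        · exact (hknot h2).elim
      have hys' : ¬ G.Reachable (T1 \ {ey}) y s := by
        intro h
        have hesmem : es ∈ T1 \ {ey} := ⟨hesT1, fun hh => heyes hh.symm⟩
        exact hT1.2 ey heyT1 v y hey ((Adj.reach ⟨es, hesmem, hes⟩).trans h.symm)
      exact ((reach_avoid hyxreach hys').mono (hsub ey)).symm
  exact ⟨hxor, hswap, hiii⟩
end
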